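/- Let p > 0 and q > 0 with 0 < p·q < 1, and let θ ∈ (0,1]. Then the lower and upper θ-intermediate dimensions of the attenuated topologist's sine curve T_{p,q} both equal (p(1+q) + 2θ(1-pq))/(p(1+q) + θ(1-pq)), i.e. lodim_θ(T_{p,q}) = updim_θ(T_{p,q}) = (p(1+q) + 2θ(1-pq))/(p(1+q) + θ(1-pq)). -/

import Mathlib

set_option maxHeartbeats 1600000


open Set Metric Filter

/-- The upper θ-intermediate dimension of a set `E` in a metric space:
the infimum of all `s ≥ 0` such that for every `ε > 0` there is `δ₀ > 0` such that for all
`0 < δ < δ₀` there is a countable cover `𝒰` of `E` with `δ ≤ diam U ≤ δ ^ θ` for all `U ∈ 𝒰`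
and `∑_{U ∈ 𝒰} (diam U) ^ s ≤ ε`. -/
noncomputable def updim {X : Type*} [PseudoMetricSpace X] (θ : ℝ) (E : Set X) : ℝ :=
  sInf {s : ℝ | 0 ≤ s ∧ ∀ ε : ℝ, 0 < ε → ∃ δ₀ : ℝ, 0 < δ₀ ∧ ∀ δ : ℝ, 0 < δ → δ < δ₀ →
    ∃ 𝒰 : Set (Set X), 𝒰.Countable ∧ E ⊆ ⋃₀ 𝒰 ∧
      (∀ U ∈ 𝒰, δ ≤ diam U ∧ diam U ≤ δ ^ θ) ∧
      ∑' U : 𝒰, ENNReal.ofReal (diam (U : Set X) ^ s) ≤ ENNReal.ofReal ε}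

/-- The lower θ-intermediate dimension of a set `E` in a metric space. -/
noncomputable def lodim {X : Type*} [PseudoMetricSpace X] (θ : ℝ) (E : Set X) : ℝ :=
  sInf {s : ℝ | 0 ≤ s ∧ ∀ ε : ℝ, 0 < ε → ∀ δ₀ : ℝ, 0 < δ₀ → ∃ δ : ℝ, 0 < δ ∧ δ < δ₀ ∧
    ∃ 𝒰 : Set (Set X), 𝒰.Countable ∧ E ⊆ ⋃₀ 𝒰 ∧
      (∀ U ∈ 𝒰, δ ≤ diam U ∧ diam U ≤ δ ^ θ) ∧
      ∑' U : 𝒰, ENNReal.ofReal (diam (U : Set X) ^ s) ≤ ENNReal.ofReal ε}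

/-- The attenuated topologist's sine curve
`T_{p,q} = {(t^{-p}, t^{-pq} sin(πt)) : t ≥ 1} ⊆ ℝ²`. -/
noncomputable def attenTopSine (p q : ℝ) : Set (EuclideanSpace ℝ (Fin 2)) :=
  {x | ∃ t : ℝ, 1 ≤ t ∧ x 0 = t ^ (-p) ∧ x 1 = t ^ (-(p * q)) * Real.sin (Real.pi * t)}

namespace ATS


abbrev E2 := EuclideanSpace ℝ (Fin 2)

noncomputable def pt (a b : ℝ) : E2 := (WithLp.equiv 2 (Fin 2 → ℝ)).symm ![a, b]

@[simp] lemma pt_apply0 (a b : ℝ) : pt a b 0 = a := rfl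
@[simp] lemma pt_apply1 (a b : ℝ) : pt a b 1 = b := rfl

lemma dist_eq2 (x y : E2) : dist x y = Real.sqrt ((x 0 - y 0)^2 + (x 1 - y 1)^2) := by
  rw [EuclideanSpace.dist_eq]
  congr 1
  rw [Fin.sum_univ_two]
  simp [Real.dist_eq, sq_abs]

lemma abs_coord0_le_dist (x y : E2) : |x 0 - y 0| ≤ dist x y := by
  rw [dist_eq2]
  rw [show |x 0 - y 0| = Real.sqrt ((x 0 - y 0)^2) by rw [Real.sqrt_sq_eq_abs]]
  exact Real.sqrt_le_sqrt (by nlinarith [sq_nonneg (x 1 - y 1)])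

lemma abs_coord1_le_dist (x y : E2) : |x 1 - y 1| ≤ dist x y := by
  rw [dist_eq2]
  rw [show |x 1 - y 1| = Real.sqrt ((x 1 - y 1)^2) by rw [Real.sqrt_sq_eq_abs]]
  exact Real.sqrt_le_sqrt (by nlinarith [sq_nonneg (x 0 - y 0)])

/-- Square of diameter `d` centered at `c`. -/
def SqD (c : E2) (d : ℝ) : Set E2 :=
  {x | |x 0 - c 0| ≤ d * Real.sqrt 2 / 4 ∧ |x 1 - c 1| ≤ d * Real.sqrt 2 / 4}

lemma mem_SqD_of {c x : E2} {d : ℝ} (hd : 0 ≤ d)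
    (h0 : |x 0 - c 0| ≤ d / 4) (h1 : |x 1 - c 1| ≤ d / 4) : x ∈ SqD c d := by
  have h2 : (1:ℝ) ≤ Real.sqrt 2 := by
    rw [show (1:ℝ) = Real.sqrt 1 by simp]
    exact Real.sqrt_le_sqrt (by norm_num)
  have key : d / 4 ≤ d * Real.sqrt 2 / 4 := by nlinarith
  exact ⟨h0.trans key, h1.trans key⟩

lemma diam_SqD (c : E2) {d : ℝ} (hd : 0 ≤ d) : diam (SqD c d) = d := by
  have h2 : Real.sqrt 2 ^ 2 = 2 := Real.sq_sqrt (by norm_num)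
  have h2' : 0 ≤ Real.sqrt 2 := Real.sqrt_nonneg 2
  apply le_antisymm
  · apply diam_le_of_forall_dist_le hd
    intro x hx y hy
    rw [dist_eq2]
    have e1 : |x 0 - y 0| ≤ d * Real.sqrt 2 / 2 := by
      have := abs_sub_abs_le_abs_sub (x 0 - c 0) (y 0 - c 0)
      calc |x 0 - y 0| = |(x 0 - c 0) - (y 0 - c 0)| := by ring_nf
        _ ≤ |x 0 - c 0| + |y 0 - c 0| := abs_sub _ _
        _ ≤ d * Real.sqrt 2 / 4 + d * Real.sqrt 2 / 4 := add_le_add hx.1 hy.1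
        _ = d * Real.sqrt 2 / 2 := by ring
    have e2 : |x 1 - y 1| ≤ d * Real.sqrt 2 / 2 := by
      calc |x 1 - y 1| = |(x 1 - c 1) - (y 1 - c 1)| := by ring_nf
        _ ≤ |x 1 - c 1| + |y 1 - c 1| := abs_sub _ _
        _ ≤ d * Real.sqrt 2 / 4 + d * Real.sqrt 2 / 4 := add_le_add hx.2 hy.2
        _ = d * Real.sqrt 2 / 2 := by ring
    have : (x 0 - y 0)^2 + (x 1 - y 1)^2 ≤ d^2 := by
      have f1 : (x 0 - y 0)^2 ≤ (d * Real.sqrt 2 / 2)^2 := by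
        rw [← sq_abs]; exact pow_le_pow_left₀ (abs_nonneg _) e1 2
      have f2 : (x 1 - y 1)^2 ≤ (d * Real.sqrt 2 / 2)^2 := by
        rw [← sq_abs]; exact pow_le_pow_left₀ (abs_nonneg _) e2 2
      nlinarith
    calc Real.sqrt ((x 0 - y 0)^2 + (x 1 - y 1)^2) ≤ Real.sqrt (d^2) := Real.sqrt_le_sqrt this
      _ = d := Real.sqrt_sq hd
  · -- two opposite corners
    have hb : Bornology.IsBounded (SqD c d) := by
      apply Metric.isBounded_iff.2
      refine ⟨2 * d, fun x hx y hy => ?_⟩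
      rw [dist_eq2]
      have f1 : (x 0 - y 0)^2 ≤ d^2 := by
        nlinarith [hx.1, hy.1, abs_nonneg (x 0 - c 0), abs_sub (x 0 - c 0) (y 0 - c 0),
          abs_le.1 hx.1, abs_le.1 hy.1]
      have f2 : (x 1 - y 1)^2 ≤ d^2 := by
        nlinarith [abs_le.1 hx.2, abs_le.1 hy.2]
      calc Real.sqrt ((x 0 - y 0)^2 + (x 1 - y 1)^2) ≤ Real.sqrt (2 * d^2) := by
            apply Real.sqrt_le_sqrt; linarith
        _ ≤ Real.sqrt ((2*d)^2) := Real.sqrt_le_sqrt (by nlinarith)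
        _ = 2 * d := Real.sqrt_sq (by linarith)
    have hmem1 : pt (c 0 - d * Real.sqrt 2 / 4) (c 1 - d * Real.sqrt 2 / 4) ∈ SqD c d := by
      constructor <;> simp <;> rw [abs_of_nonneg (by positivity)]
    have hmem2 : pt (c 0 + d * Real.sqrt 2 / 4) (c 1 + d * Real.sqrt 2 / 4) ∈ SqD c d := by
      constructor <;> simp <;> rw [abs_of_nonneg (by positivity)]
    have := dist_le_diam_of_mem hb hmem1 hmem2
    rw [dist_eq2] at this
    simp only [pt_apply0, pt_apply1] at this
    have key : Real.sqrt ((c 0 - d * Real.sqrt 2 / 4 - (c 0 + d * Real.sqrt 2 / 4))^2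
        + (c 1 - d * Real.sqrt 2 / 4 - (c 1 + d * Real.sqrt 2 / 4))^2) = d := by
      have : (c 0 - d * Real.sqrt 2 / 4 - (c 0 + d * Real.sqrt 2 / 4))^2
        + (c 1 - d * Real.sqrt 2 / 4 - (c 1 + d * Real.sqrt 2 / 4))^2 = d^2 := by
        have : (d * Real.sqrt 2 / 2)^2 = d^2 / 2 := by
          rw [div_pow, mul_pow, h2]; ring
        nlinarith
      rw [this, Real.sqrt_sq hd]
    rw [key] at this
    exact this




lemma hasDerivAt_rpow_neg {c t : ℝ} (ht : 0 < t) :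
    HasDerivAt (fun u : ℝ => u ^ (-c)) (-c * t ^ (-c - 1)) t := by
  have := Real.hasDerivAt_rpow_const (x := t) (p := -c) (Or.inl ht.ne')
  simpa [sub_eq_add_neg, add_comm] using this

/-- MVT upper bound on an interval. -/
lemma abs_sub_le_of_deriv {f f' : ℝ → ℝ} {a b C : ℝ} (hab : a ≤ b)
    (hd : ∀ t ∈ Icc a b, HasDerivAt f (f' t) t)
    (hC : ∀ t ∈ Icc a b, |f' t| ≤ C) {u v : ℝ} (hu : u ∈ Icc a b) (hv : v ∈ Icc a b) :
    |f v - f u| ≤ C * |v - u| := by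
  have := Convex.norm_image_sub_le_of_norm_hasDerivWithin_le
    (f := f) (f' := f') (C := C) (s := Icc a b)
    (fun x hx => (hd x hx).hasDerivWithinAt) (fun x hx => by simpa using hC x hx)
    (convex_Icc a b) hu hv
  simpa [Real.norm_eq_abs] using this

/-- MVT lower bound for differences of negative powers:
for `1 ≤ a ≤ b ≤ M`, `a^(-c) - b^(-c) ≥ c * M^(-c-1) * (b - a)`. -/
lemma rpow_neg_gap {c a b M : ℝ} (hc : 0 < c) (ha : 1 ≤ a) (hab : a ≤ b) (hbM : b ≤ M) :
    c * M ^ (-c - 1) * (b - a) ≤ a ^ (-c) - b ^ (-c) := by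
  rcases eq_or_lt_of_le hab with rfl | hab'
  · simp
  have hcont : ContinuousOn (fun u : ℝ => u ^ (-c)) (Icc a b) := by
    intro x hx
    exact (Real.continuousAt_rpow_const x (-c) (Or.inl (by linarith [hx.1]))).continuousWithinAt
  have hderiv : ∀ x ∈ Ioo a b, HasDerivAt (fun u : ℝ => u ^ (-c)) (-c * x ^ (-c - 1)) x :=
    fun x hx => hasDerivAt_rpow_neg (by linarith [hx.1])
  obtain ⟨ξ, hξ, hslope⟩ := exists_hasDerivAt_eq_slope (fun u : ℝ => u ^ (-c))
    (fun x => -c * x ^ (-c - 1)) hab' hcont hderiv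
  have hba : 0 < b - a := by linarith
  have : b ^ (-c) - a ^ (-c) = -c * ξ ^ (-c - 1) * (b - a) := by
    field_simp at hslope ⊢
    nlinarith [hslope]
  have hξM : M ^ (-c-1) ≤ ξ ^ (-c-1) :=
    Real.rpow_le_rpow_of_nonpos (by linarith [hξ.1]) (by linarith [hξ.2]) (by linarith)
  have hmul := mul_le_mul_of_nonneg_left hξM (by positivity : (0:ℝ) ≤ c * (b - a))
  nlinarith [hmul]

/-- Sum of `n^(-β)` for `n = 1..M` is at most `(1 + 1/(1-β)) M^(1-β)`, for `0 < β < 1`. -/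
lemma sum_rpow_le {β : ℝ} (hβ0 : 0 < β) (hβ1 : β < 1) (M : ℕ) (hM : 1 ≤ M) :
    ∑ n ∈ Finset.Icc 1 M, (n : ℝ) ^ (-β) ≤ (1 + 1/(1-β)) * (M : ℝ) ^ (1-β) := by
  have h1β : 0 < 1 - β := by linarith
  -- step inequality : for n ≥ 2, n^(-β) ≤ ((n:ℝ)^(1-β) - ((n-1:ℕ):ℝ)^(1-β))/(1-β)
  have key : ∀ M : ℕ, 1 ≤ M →
      ∑ n ∈ Finset.Icc 1 M, (n : ℝ) ^ (-β) ≤ 1 + ((M:ℝ) ^ (1-β) - 1)/(1-β) := by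
    intro M hM
    induction M with
    | zero => omega
    | succ m ih =>
      rcases Nat.eq_or_lt_of_le hM with h | h
      · simp [← h]
      have hm : 1 ≤ m := by omega
      have hsum := ih hm
      rw [Finset.sum_Icc_succ_top (by omega : 1 ≤ m + 1)]
      -- step bound via MVT on x ↦ x^{1-β} over [m, m+1]
      have step : ((m+1 : ℕ) : ℝ) ^ (-β) ≤ (((m+1:ℕ):ℝ) ^ (1-β) - (m:ℝ) ^ (1-β))/(1-β) := by
        have hcont : ContinuousOn (fun u : ℝ => u ^ (1-β)) (Icc (m:ℝ) (m+1)) := by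
          intro x hx
          have hx0 : (0:ℝ) < x := by
            have : (1:ℝ) ≤ (m:ℝ) := by exact_mod_cast hm
            linarith [hx.1]
          exact (Real.continuousAt_rpow_const x (1-β) (Or.inl hx0.ne')).continuousWithinAt
        have hderiv : ∀ x ∈ Ioo (m:ℝ) (m+1),
            HasDerivAt (fun u : ℝ => u ^ (1-β)) ((1-β) * x ^ (-β)) x := by
          intro x hx
          have hx0 : (0:ℝ) < x := by
            have : (1:ℝ) ≤ (m:ℝ) := by exact_mod_cast hm
            linarith [hx.1]
          have := Real.hasDerivAt_rpow_const (x := x) (p := 1-β) (Or.inl hx0.ne')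
          simpa [show (1:ℝ)-β-1 = -β by ring] using this
        obtain ⟨ξ, hξ, hslope⟩ := exists_hasDerivAt_eq_slope (fun u : ℝ => u ^ (1-β))
          (fun x => (1-β) * x ^ (-β)) (lt_add_one (m:ℝ))
          hcont hderiv
        have hξ0 : (0:ℝ) < ξ := by
          have : (1:ℝ) ≤ (m:ℝ) := by exact_mod_cast hm
          linarith [hξ.1]
        have hmono : ((m+1:ℕ):ℝ) ^ (-β) ≤ ξ ^ (-β) := by
          push_cast
          exact Real.rpow_le_rpow_of_nonpos hξ0 (by linarith [hξ.2]) (by linarith)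
        have heq : (((m+1:ℕ):ℝ) ^ (1-β) - (m:ℝ) ^ (1-β)) = (1-β) * ξ ^ (-β) := by
          push_cast at hslope ⊢
          field_simp at hslope
          linarith [hslope]
        rw [heq]
        calc ((m+1:ℕ):ℝ) ^ (-β) ≤ ξ ^ (-β) := hmono
          _ = (1-β) * ξ ^ (-β) / (1-β) := by field_simp
      calc ∑ n ∈ Finset.Icc 1 m, (n:ℝ) ^ (-β) + ((m+1:ℕ):ℝ) ^ (-β)
          ≤ (1 + ((m:ℝ) ^ (1-β) - 1)/(1-β)) + (((m+1:ℕ):ℝ) ^ (1-β) - (m:ℝ) ^ (1-β))/(1-β) :=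
            add_le_add hsum step
        _ = 1 + (((m+1:ℕ):ℝ) ^ (1-β) - 1)/(1-β) := by ring
  have h := key M hM
  have hM1 : (1:ℝ) ≤ (M:ℝ) ^ (1-β) :=
    Real.one_le_rpow (by exact_mod_cast hM) (by linarith)
  calc ∑ n ∈ Finset.Icc 1 M, (n : ℝ) ^ (-β) ≤ 1 + ((M:ℝ) ^ (1-β) - 1)/(1-β) := h
    _ ≤ (M:ℝ)^(1-β) + ((M:ℝ)^(1-β)) * (1/(1-β)) := by
        have e1 : ((M:ℝ) ^ (1-β) - 1)/(1-β) ≤ (M:ℝ)^(1-β) * (1/(1-β)) := by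
          rw [div_eq_mul_inv, ← one_div]
          exact mul_le_mul_of_nonneg_right (by linarith) (le_of_lt (one_div_pos.2 h1β))
        linarith
    _ = (1 + 1/(1-β)) * (M : ℝ) ^ (1-β) := by ring



/-- Grid covering lemma on `[0, B]`. -/
lemma grid_cover {w B x : ℝ} (hw : 0 < w) (hB : 0 < B) (hx : 0 ≤ x) (hxB : x ≤ B) :
    ∃ i : ℕ, i < ⌈B / w⌉₊ ∧ |x - ((i : ℝ) + 1/2) * w| ≤ w / 2 := by
  set m := ⌈B / w⌉₊ with hm
  have hm1 : 1 ≤ m := by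
    rw [hm]
    exact Nat.one_le_ceil_iff.2 (by positivity)
  set k := ⌊x / w⌋₊ with hk
  by_cases hkm : k < m
  · refine ⟨k, hkm, ?_⟩
    have h1 : (k:ℝ) * w ≤ x := by
      have := Nat.floor_le (by positivity : 0 ≤ x / w)
      rw [← hk] at this
      calc (k:ℝ) * w ≤ (x / w) * w := by nlinarith
        _ = x := by field_simp
    have h2 : x < ((k:ℝ) + 1) * w := by
      have := Nat.lt_floor_add_one (x / w)
      rw [← hk] at this
      calc x = (x / w) * w := by field_simp
        _ < ((k:ℝ) + 1) * w := by nlinarith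
    rw [abs_le]
    constructor <;> nlinarith
  · refine ⟨m - 1, by omega, ?_⟩
    push_neg at hkm
    have h1 : (m:ℝ) ≤ (k:ℝ) := by exact_mod_cast hkm
    have h2 : (k:ℝ) ≤ x / w := Nat.floor_le (by positivity)
    have h3 : B / w ≤ (m:ℝ) := Nat.le_ceil _
    have hxm : x = (m:ℝ) * w := by
      have hxw : x / w ≤ B / w := by gcongr
      have : x / w = (m:ℝ) := le_antisymm (hxw.trans h3) (h1.trans h2)
      calc x = (x / w) * w := by field_simp
        _ = (m:ℝ) * w := by rw [this]
    have hcast : ((m - 1 : ℕ) : ℝ) = (m:ℝ) - 1 := by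
      have : 1 ≤ m := hm1
      push_cast [this]
      ring
    rw [hxm, hcast, abs_le]
    constructor <;> nlinarith

lemma exists_delta0 {P : ℝ → Prop} (h : ∀ᶠ δ in nhdsWithin (0:ℝ) (Set.Ioi 0), P δ) :
    ∃ δ₀ : ℝ, 0 < δ₀ ∧ ∀ δ : ℝ, 0 < δ → δ < δ₀ → P δ := by
  rw [eventually_iff, mem_nhdsGT_iff_exists_Ioc_subset] at h
  obtain ⟨u, hu, hsub⟩ := h
  exact ⟨u, hu, fun δ h1 h2 => hsub ⟨h1, le_of_lt h2⟩⟩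

lemma tendsto_rpow_zero {e : ℝ} (he : 0 < e) :
    Tendsto (fun δ : ℝ => δ ^ e) (nhdsWithin (0:ℝ) (Set.Ioi 0)) (nhds 0) := by
  have : ContinuousAt (fun x : ℝ => x ^ e) 0 :=
    Real.continuousAt_rpow_const 0 e (Or.inr he.le)
  have h0 : (0:ℝ) ^ e = 0 := Real.zero_rpow he.ne'
  have := this.tendsto
  rw [h0] at this
  exact this.mono_left nhdsWithin_le_nhds

/-- Eventually `c * δ ^ e ≤ b` for positive exponent. -/
lemma eventually_rpow_le (c : ℝ) {e b : ℝ} (he : 0 < e) (hb : 0 < b) :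
    ∀ᶠ δ in nhdsWithin (0:ℝ) (Set.Ioi 0), c * δ ^ e ≤ b := by
  have h := (tendsto_rpow_zero he).const_mul c
  have : Tendsto (fun δ : ℝ => c * δ ^ e) (nhdsWithin (0:ℝ) (Set.Ioi 0)) (nhds 0) := by
    simpa using h
  exact this.eventually_le_const hb

/-- A finset of naturals contained in a window of width `D` has at most `D+1` elements. -/
lemma card_le_of_window {S : Finset ℕ} {D : ℕ} (h : ∀ a ∈ S, ∀ b ∈ S, b ≤ a + D) :
    S.card ≤ D + 1 := by
  rcases S.eq_empty_or_nonempty with rfl | hS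
  · simp
  have hsub : S ⊆ Finset.Icc (S.min' hS) (S.min' hS + D) := by
    intro b hb
    rw [Finset.mem_Icc]
    exact ⟨S.min'_le b hb, h _ (S.min'_mem hS) b hb⟩
  calc S.card ≤ (Finset.Icc (S.min' hS) (S.min' hS + D)).card := Finset.card_le_card hsub
    _ = D + 1 := by rw [Nat.card_Icc]; omega

lemma sum_image_le_ennreal {ι : Type*} [DecidableEq (Set (EuclideanSpace ℝ (Fin 2)))]
    (A : Finset ι) (f : ι → Set (EuclideanSpace ℝ (Fin 2)))
    (F : Set (EuclideanSpace ℝ (Fin 2)) → ENNReal) :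
    ∑ U ∈ A.image f, F U ≤ ∑ i ∈ A, F (f i) := by
  classical
  induction A using Finset.induction with
  | empty => simp
  | insert a A' hni ih =>
    rw [Finset.image_insert, Finset.sum_insert hni]
    by_cases hfa : f a ∈ A'.image f
    · rw [Finset.insert_eq_self.2 hfa]
      calc ∑ U ∈ A'.image f, F U ≤ ∑ i ∈ A', F (f i) := ih
        _ ≤ F (f a) + ∑ i ∈ A', F (f i) := le_add_self
    · rw [Finset.sum_insert hfa]
      exact add_le_add le_rfl ih

/-- tsum over a finite set-subtype equals a finset sum bound. -/
lemma tsum_set_le {X : Type*} (𝒰 : Set (Set X)) (h : 𝒰.Finite)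
    (F : Set X → ENNReal) (T : Finset (Set X)) (hT : ∀ U ∈ 𝒰, U ∈ T) :
    ∑' (U : 𝒰), F U ≤ ∑ U ∈ T, F U := by
  classical
  rw [tsum_subtype]
  rw [tsum_eq_sum (s := h.toFinset) (by
    intro b hb
    simp only [Set.indicator_apply]
    rw [if_neg]
    intro hmem
    exact hb (h.mem_toFinset.2 hmem))]
  calc ∑ U ∈ h.toFinset, Set.indicator 𝒰 F U ≤ ∑ U ∈ h.toFinset, F U := by
        apply Finset.sum_le_sum
        intro i _
        exact Set.indicator_apply_le (fun _ => le_rfl)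
    _ ≤ ∑ U ∈ T, F U := by
        apply Finset.sum_le_sum_of_subset
        intro U hU
        exact hT U (h.mem_toFinset.1 hU)




noncomputable def Xf (p t : ℝ) : ℝ := t ^ (-p)
noncomputable def Yf (p q t : ℝ) : ℝ := t ^ (-(p*q)) * Real.sin (Real.pi * t)

lemma hasDerivAt_Yf {p q t : ℝ} (ht : 0 < t) :
    HasDerivAt (Yf p q)
      (-(p*q) * t ^ (-(p*q) - 1) * Real.sin (Real.pi * t)
        + t ^ (-(p*q)) * (Real.pi * Real.cos (Real.pi * t))) t := by
  have h1 : HasDerivAt (fun u : ℝ => u ^ (-(p*q))) (-(p*q) * t ^ (-(p*q) - 1)) t :=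
    hasDerivAt_rpow_neg ht
  have hg : HasDerivAt (fun u : ℝ => Real.pi * u) Real.pi t := by
    simpa using (hasDerivAt_id t).const_mul Real.pi
  have h2 : HasDerivAt (fun u : ℝ => Real.sin (Real.pi * u)) (Real.cos (Real.pi * t) * Real.pi) t :=
    (Real.hasDerivAt_sin (Real.pi * t)).comp t hg
  have := h1.mul h2
  unfold Yf
  exact this.congr_deriv (by ring)

/-- rpow of base ≥ 1 with smaller exponent. -/
lemma rpow_anti_exp {t c d : ℝ} (ht : 1 ≤ t) (hcd : c ≤ d) : t ^ c ≤ t ^ d :=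
  Real.rpow_le_rpow_of_exponent_le ht hcd

/-- Combined Lipschitz estimate on `[a, a+1]`, `a ≥ 1`:
both coordinates move at most `C₀ * a^(-(p*q)) * |v - u|` with `C₀ = p + p*q + 4`. -/
lemma lip_X {p q a u v : ℝ} (hp : 0 < p) (hq : 0 < q) (hpq : p*q < 1) (ha : 1 ≤ a)
    (hu : u ∈ Icc a (a+1)) (hv : v ∈ Icc a (a+1)) :
    |Xf p v - Xf p u| ≤ ((p + p*q + 4) * a ^ (-(p*q))) * |v - u| := by
  have ha0 : 0 < a := by linarith
  have key : ∀ t ∈ Icc a (a+1), |(-p) * t ^ (-p - 1)| ≤ (p + p*q + 4) * a ^ (-(p*q)) := by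
    intro t htt
    have ht0 : 0 < t := by linarith [htt.1]
    have ht1 : 1 ≤ t := by linarith [htt.1]
    have e1 : t ^ (-p-1) ≤ t ^ (-(p*q)) := rpow_anti_exp ht1 (by linarith)
    have e2 : t ^ (-(p*q)) ≤ a ^ (-(p*q)) :=
      Real.rpow_le_rpow_of_nonpos ha0 htt.1 (by nlinarith)
    have e3 : (0:ℝ) < t ^ (-p-1) := Real.rpow_pos_of_pos ht0 _
    rw [abs_mul, abs_of_nonneg (le_of_lt e3), abs_neg, abs_of_pos hp]
    calc p * t ^ (-p-1) ≤ p * a ^ (-(p*q)) :=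
          mul_le_mul_of_nonneg_left (le_trans e1 e2) hp.le
      _ ≤ (p + p*q + 4) * a ^ (-(p*q)) := by
          have h5 : (0:ℝ) < a ^ (-(p*q)) := Real.rpow_pos_of_pos ha0 _
          nlinarith [mul_nonneg (by positivity : (0:ℝ) ≤ p*q + 4) h5.le]
  have := Convex.norm_image_sub_le_of_norm_hasDerivWithin_le
    (f := Xf p) (f' := fun t => (-p) * t ^ (-p - 1)) (C := (p + p*q + 4) * a ^ (-(p*q)))
    (s := Icc a (a+1))
    (fun x hx => (hasDerivAt_rpow_neg (by linarith [hx.1] : (0:ℝ) < x)).hasDerivWithinAt)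
    (fun x hx => by
      have h := key x hx
      rw [Real.norm_eq_abs]
      exact h) (convex_Icc _ _) hu hv
  simpa [Real.norm_eq_abs] using this

lemma lip_Y {p q a u v : ℝ} (hp : 0 < p) (hq : 0 < q) (hpq : p*q < 1) (ha : 1 ≤ a)
    (hu : u ∈ Icc a (a+1)) (hv : v ∈ Icc a (a+1)) :
    |Yf p q v - Yf p q u| ≤ ((p + p*q + 4) * a ^ (-(p*q))) * |v - u| := by
  have ha0 : 0 < a := by linarith
  have key : ∀ t ∈ Icc a (a+1),
      |(-(p*q) * t ^ (-(p*q) - 1) * Real.sin (Real.pi * t)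
        + t ^ (-(p*q)) * (Real.pi * Real.cos (Real.pi * t)))| ≤ (p + p*q + 4) * a ^ (-(p*q)) := by
    intro t htt
    have ht0 : 0 < t := by linarith [htt.1]
    have ht1 : 1 ≤ t := by linarith [htt.1]
    have e1 : t ^ (-(p*q)-1) ≤ t ^ (-(p*q)) := rpow_anti_exp ht1 (by linarith)
    have e2 : t ^ (-(p*q)) ≤ a ^ (-(p*q)) :=
      Real.rpow_le_rpow_of_nonpos ha0 htt.1 (by nlinarith)
    have e3 : (0:ℝ) < t ^ (-(p*q)-1) := Real.rpow_pos_of_pos ht0 _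
    have e4 : (0:ℝ) < t ^ (-(p*q)) := Real.rpow_pos_of_pos ht0 _
    have hsin := Real.abs_sin_le_one (Real.pi * t)
    have hcos := Real.abs_cos_le_one (Real.pi * t)
    have hπ := Real.pi_le_four
    have hπ0 := Real.pi_pos
    calc |(-(p*q) * t ^ (-(p*q) - 1) * Real.sin (Real.pi * t)
        + t ^ (-(p*q)) * (Real.pi * Real.cos (Real.pi * t)))|
        ≤ |(-(p*q) * t ^ (-(p*q) - 1) * Real.sin (Real.pi * t))|
          + |t ^ (-(p*q)) * (Real.pi * Real.cos (Real.pi * t))| := abs_add_le _ _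
      _ ≤ (p*q) * t ^ (-(p*q)-1) + t ^ (-(p*q)) * (Real.pi * 1) := by
          apply add_le_add
          · rw [abs_mul, abs_mul, abs_neg, abs_of_nonneg (by positivity : (0:ℝ) ≤ p*q),
              abs_of_pos e3]
            simpa using mul_le_mul_of_nonneg_left hsin
              (show (0:ℝ) ≤ p*q*t^(-(p*q)-1) by positivity)
          · rw [abs_mul, abs_mul, abs_of_pos e4, abs_of_pos hπ0]
            exact mul_le_mul_of_nonneg_left
              (mul_le_mul_of_nonneg_left hcos hπ0.le) e4.le
      _ ≤ (p*q) * a ^ (-(p*q)) + a ^ (-(p*q)) * 4 := by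
          apply add_le_add
          · exact mul_le_mul_of_nonneg_left (le_trans e1 e2)
              (show (0:ℝ) ≤ p*q by positivity)
          · have h6 : (0:ℝ) < a ^ (-(p*q)) := Real.rpow_pos_of_pos ha0 _
            have := mul_le_mul e2 hπ hπ0.le h6.le
            simpa [mul_one] using this
      _ ≤ (p + p*q + 4) * a ^ (-(p*q)) := by
          have h5 : (0:ℝ) < a ^ (-(p*q)) := Real.rpow_pos_of_pos ha0 _
          nlinarith [mul_pos hp h5]
  have := Convex.norm_image_sub_le_of_norm_hasDerivWithin_le
    (f := Yf p q)
    (f' := fun t => -(p*q) * t ^ (-(p*q) - 1) * Real.sin (Real.pi * t)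
        + t ^ (-(p*q)) * (Real.pi * Real.cos (Real.pi * t)))
    (C := (p + p*q + 4) * a ^ (-(p*q))) (s := Icc a (a+1))
    (fun x hx => (hasDerivAt_Yf (by linarith [hx.1] : (0:ℝ) < x)).hasDerivWithinAt)
    (fun x hx => by
      have h := key x hx
      rw [Real.norm_eq_abs]
      exact h) (convex_Icc _ _) hu hv
  simpa [Real.norm_eq_abs] using this

lemma cos_pi_nat (n : ℕ) : Real.cos (Real.pi * n) = (-1) ^ n := by
  induction n with
  | zero => simp
  | succ m ih =>
    have : Real.pi * (m + 1 : ℕ) = Real.pi * m + Real.pi := by push_cast; ring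
    rw [this, Real.cos_add_pi, ih]
    ring

lemma sin_pi_nat (n : ℕ) : Real.sin (Real.pi * n) = 0 := by
  rw [mul_comm]
  exact Real.sin_nat_mul_pi n

lemma Yf_nat (p q : ℝ) (n : ℕ) : Yf p q n = 0 := by
  unfold Yf; rw [sin_pi_nat]; ring

lemma Yf_half (p q : ℝ) (n : ℕ) :
    Yf p q ((n:ℝ) + 1/2) = ((n:ℝ) + 1/2) ^ (-(p*q)) * (-1:ℝ) ^ n := by
  unfold Yf
  congr 1
  have : Real.pi * ((n:ℝ) + 1/2) = Real.pi * n + Real.pi / 2 := by ring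
  rw [this, Real.sin_add_pi_div_two, cos_pi_nat]

lemma continuousOn_Yf {p q a b : ℝ} (ha : 0 < a) :
    ContinuousOn (Yf p q) (Icc a b) := by
  apply ContinuousOn.mul
  · intro x hx
    exact (Real.continuousAt_rpow_const x _ (Or.inl (by linarith [hx.1]))).continuousWithinAt
  · exact (Real.continuous_sin.comp (continuous_const.mul continuous_id)).continuousOn

/-- IVT: on `[n, n+1/2]` the second coordinate attains `v * (-1)^n` for any
`0 ≤ v ≤ (n+1/2)^(-(p*q))`. -/
lemma exists_Yf_eq {p q v : ℝ} (n : ℕ) (hn : 1 ≤ n) (hv : 0 ≤ v)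
    (hv' : v ≤ ((n:ℝ) + 1/2) ^ (-(p*q))) :
    ∃ t ∈ Icc (n:ℝ) ((n:ℝ) + 1/2), Yf p q t = v * (-1:ℝ) ^ n := by
  have hn0 : (0:ℝ) < (n:ℝ) := by exact_mod_cast hn
  have hcont : ContinuousOn (Yf p q) (uIcc (n:ℝ) ((n:ℝ) + 1/2)) := by
    rw [uIcc_of_le (by linarith)]
    exact continuousOn_Yf hn0
  have hmem : v * (-1:ℝ) ^ n ∈ uIcc (Yf p q (n:ℝ)) (Yf p q ((n:ℝ) + 1/2)) := by
    rw [show Yf p q (n:ℝ) = 0 from Yf_nat p q n, Yf_half p q n]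
    rcases Nat.even_or_odd n with he | ho
    · rw [he.neg_one_pow]
      rw [uIcc_of_le (by positivity)]
      exact ⟨by simpa using hv, by simpa using hv'⟩
    · rw [ho.neg_one_pow]
      rw [uIcc_of_ge (by simp; positivity)]
      constructor
      · simp only [mul_neg_one, neg_le_neg_iff]
        exact hv'
      · simp only [mul_neg_one, neg_nonpos]
        exact hv
  obtain ⟨t, ht, hYt⟩ := intermediate_value_uIcc hcont hmem
  rw [uIcc_of_le (by linarith)] at ht
  exact ⟨t, ht, hYt⟩



-- placeholders for already-proven lemmas (will be merged)
/-- The explicit cover at scale δ, with cost bound. -/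
lemma upper_cover (p q θ s γ : ℝ) (hp : 0 < p) (hq : 0 < q) (hpq : p*q < 1)
    (hθ : 0 < θ) (hθ' : θ ≤ 1) (hγ : 0 < γ)
    (δ : ℝ) (hδ : 0 < δ) (hδ1 : δ < 1) :
    ∃ 𝒰 : Set (Set E2), 𝒰.Countable ∧ attenTopSine p q ⊆ ⋃₀ 𝒰 ∧
      (∀ U ∈ 𝒰, δ ≤ diam U ∧ diam U ≤ δ ^ θ) ∧
      ∑' U : 𝒰, ENNReal.ofReal (diam (U : Set E2) ^ s) ≤
        ENNReal.ofReal (16*(p+p*q+4)*(1+1/(1-p*q)) * δ^(s-1-γ*(1-p*q)) + 2*δ^(s-γ)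
          + 8*δ^(γ*(p+p*q)-2*θ+θ*s) + 2*δ^(γ*p-θ+θ*s) + 4*δ^(γ*(p*q)-θ+θ*s) + δ^(θ*s)) := by
  classical
  have hδδθ : δ ≤ δ^θ := by
    nth_rewrite 1 [← Real.rpow_one δ]
    exact Real.rpow_le_rpow_of_exponent_ge hδ hδ1.le hθ'
  set C₀ : ℝ := p + p*q + 4 with hC₀
  have hC₀pos : 0 < C₀ := by positivity
  -- scale parameters
  set N : ℕ := ⌈δ^(-γ)⌉₊ with hN
  have hδγ : 1 < δ^(-γ) := by
    rw [show -γ = -γ by rfl, Real.rpow_neg hδ.le]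
    rw [lt_inv_comm₀ (by norm_num) (Real.rpow_pos_of_pos hδ _), inv_one]
    exact Real.rpow_lt_one hδ.le hδ1 hγ
  have hN1 : 1 ≤ N := Nat.one_le_ceil_iff.2 (by linarith)
  have hNlb : δ^(-γ) ≤ (N:ℝ) := Nat.le_ceil _
  have hNub : (N:ℝ) ≤ 2 * δ^(-γ) := by
    have := Nat.ceil_lt_add_one (le_of_lt (lt_trans one_pos hδγ))
    rw [← hN] at this
    linarith
  have hNpos : (0:ℝ) < N := by positivity
  have hN1' : (1:ℝ) ≤ (N:ℝ) := by exact_mod_cast hN1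
  -- near-part grid sizes
  set m : ℕ → ℕ := fun n => ⌈8*C₀*(n:ℝ)^(-(p*q))/δ⌉₊ with hmdef
  have hm1 : ∀ n : ℕ, 1 ≤ n → 1 ≤ m n := by
    intro n hn
    apply Nat.one_le_ceil_iff.2
    have : (0:ℝ) < (n:ℝ) := by exact_mod_cast hn
    positivity
  have hmlb : ∀ n : ℕ, 1 ≤ n → 8*C₀*(n:ℝ)^(-(p*q))/δ ≤ (m n : ℝ) := fun n _ => Nat.le_ceil _
  have hmub : ∀ n : ℕ, 1 ≤ n → (m n : ℝ) ≤ 8*C₀*(n:ℝ)^(-(p*q))/δ + 1 := by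
    intro n hn
    have h0 : (0:ℝ) < (n:ℝ) := by exact_mod_cast hn
    have := Nat.ceil_lt_add_one (show (0:ℝ) ≤ 8*C₀*(n:ℝ)^(-(p*q))/δ by positivity)
    exact le_of_lt this
  -- center parameter
  set u : ℕ → ℕ → ℝ := fun n j => (n:ℝ) + (j:ℝ)/(m n) with hu
  set fnear : (Σ _ : ℕ, ℕ) → Set E2 :=
    fun x => SqD (pt (Xf p (u x.1 x.2)) (Yf p q (u x.1 x.2))) δ with hfnear
  set A : Finset (Σ _ : ℕ, ℕ) := (Finset.Icc 1 N).sigma (fun n => Finset.range (m n)) with hA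
  -- tail part
  set w : ℝ := δ^θ/2 with hw
  have hδθ : 0 < δ^θ := Real.rpow_pos_of_pos hδ _
  have hwpos : 0 < w := by rw [hw]; positivity
  set mx : ℕ := ⌈(N:ℝ)^(-p)/w⌉₊ with hmx
  set my : ℕ := ⌈2*(N:ℝ)^(-(p*q))/w⌉₊ with hmy
  set gtail : ℕ × ℕ → Set E2 :=
    fun ik => SqD (pt (((ik.1:ℝ)+1/2)*w) (-(N:ℝ)^(-(p*q)) + ((ik.2:ℝ)+1/2)*w)) (δ^θ) with hgtail
  set B : Finset (ℕ × ℕ) := Finset.range mx ×ˢ Finset.range my with hB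
  refine ⟨(fnear '' ↑A) ∪ (gtail '' ↑B), ?_, ?_, ?_, ?_⟩
  · exact ((A.finite_toSet.image fnear).union (B.finite_toSet.image gtail)).countable
  · -- coverage
    rintro x ⟨t, ht1, hx0, hx1⟩
    by_cases htN : t < (N:ℝ) + 1
    · -- near part
      set n : ℕ := ⌊t⌋₊ with hn
      have hn1 : 1 ≤ n := Nat.le_floor (by exact_mod_cast ht1)
      have hnt : (n:ℝ) ≤ t := Nat.floor_le (by linarith)
      have htn : t < (n:ℝ) + 1 := Nat.lt_floor_add_one t
      have hnN : n ≤ N := by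
        have : (n:ℝ) ≤ (N:ℝ) := by
          by_contra hcon
          push_neg at hcon
          have : (N:ℝ) + 1 ≤ (n:ℝ) := by
            have : N + 1 ≤ n := by exact_mod_cast Nat.succ_le_of_lt (by exact_mod_cast hcon)
            exact_mod_cast this
          linarith
        exact_mod_cast this
      have hmn1 : 1 ≤ m n := hm1 n hn1
      have hmnpos : (0:ℝ) < (m n : ℝ) := by exact_mod_cast hmn1
      set j : ℕ := ⌊(t - n) * (m n)⌋₊ with hj
      have hjm : j < m n := by
        apply Nat.floor_lt (by nlinarith) |>.2
        calc (t - n) * (m n) < 1 * (m n) := by nlinarith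
          _ = (m n : ℝ) := one_mul _
      have hjle : (j:ℝ) ≤ (t - n) * (m n) := Nat.floor_le (by nlinarith)
      have hjgt : (t - n) * (m n) < (j:ℝ) + 1 := Nat.lt_floor_add_one _
      have hut : |t - u n j| ≤ 1/(m n) := by
        have h1 : (j:ℝ)/(m n) ≤ t - n := by
          rw [div_le_iff₀ hmnpos]; linarith [hjle]
        have h2 : t - n < (j:ℝ)/(m n) + 1/(m n) := by
          rw [← add_div, lt_div_iff₀ hmnpos]; linarith [hjgt]
        have hueq : u n j = (n:ℝ) + (j:ℝ)/(m n) := rfl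
        rw [hueq, abs_le]
        have hm0 : (0:ℝ) < 1/(m n) := by positivity
        constructor <;> linarith
      have huIcc : u n j ∈ Icc (n:ℝ) ((n:ℝ)+1) := by
        constructor
        · simp only [hu]
          have : (0:ℝ) ≤ (j:ℝ)/(m n) := by positivity
          linarith
        · simp only [hu]
          have : (j:ℝ)/(m n) ≤ 1 := by
            rw [div_le_one hmnpos]
            have : (j:ℝ) + 1 ≤ (m n : ℝ) := by exact_mod_cast hjm
            linarith
          linarith
      have htIcc : t ∈ Icc (n:ℝ) ((n:ℝ)+1) := ⟨hnt, le_of_lt htn⟩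
      have hn1' : (1:ℝ) ≤ (n:ℝ) := by exact_mod_cast hn1
      have hnrpow : (0:ℝ) < (n:ℝ)^(-(p*q)) := Real.rpow_pos_of_pos (by linarith) _
      have hbound : C₀ * (n:ℝ)^(-(p*q)) * |t - u n j| ≤ δ/4 := by
        calc C₀ * (n:ℝ)^(-(p*q)) * |t - u n j| ≤ C₀ * (n:ℝ)^(-(p*q)) * (1/(m n)) := by
              apply mul_le_mul_of_nonneg_left hut (by positivity)
          _ ≤ δ/4 := by
              rw [mul_one_div, div_le_div_iff₀ hmnpos (by norm_num : (0:ℝ) < 4)]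
              have h8 := hmlb n hn1
              rw [div_le_iff₀ hδ] at h8
              nlinarith
      refine mem_sUnion.2 ⟨fnear ⟨n, j⟩, Or.inl (mem_image_of_mem _ ?_), ?_⟩
      · rw [Finset.mem_coe, hA, Finset.mem_sigma]
        exact ⟨Finset.mem_Icc.2 ⟨hn1, hnN⟩, Finset.mem_range.2 hjm⟩
      · apply mem_SqD_of hδ.le
        · rw [pt_apply0, hx0]
          calc |Xf p t - Xf p (u n j)| ≤ (C₀ * (n:ℝ)^(-(p*q))) * |t - u n j| :=
                lip_X hp hq hpq hn1' huIcc htIcc |>.trans_eq (by rw [abs_sub_comm])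
            _ ≤ δ/4 := hbound
        · rw [pt_apply1, hx1]
          calc |Yf p q t - Yf p q (u n j)| ≤ (C₀ * (n:ℝ)^(-(p*q))) * |t - u n j| :=
                lip_Y hp hq hpq hn1' huIcc htIcc |>.trans_eq (by rw [abs_sub_comm])
            _ ≤ δ/4 := hbound
    · -- tail part
      push_neg at htN
      have htN' : (N:ℝ) ≤ t := by linarith
      have ht0 : (0:ℝ) < t := by linarith
      have hxN : t^(-p) ≤ (N:ℝ)^(-p) :=
        Real.rpow_le_rpow_of_nonpos hNpos htN' (by linarith)
      have hx0pos : (0:ℝ) < t^(-p) := Real.rpow_pos_of_pos ht0 _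
      have hyN : |t ^ (-(p * q)) * Real.sin (Real.pi * t)| ≤ (N:ℝ)^(-(p*q)) := by
        rw [abs_mul]
        have h1 : |t ^ (-(p*q))| = t ^ (-(p*q)) := abs_of_pos (Real.rpow_pos_of_pos ht0 _)
        rw [h1]
        calc t ^ (-(p*q)) * |Real.sin (Real.pi * t)| ≤ t ^ (-(p*q)) * 1 :=
              mul_le_mul_of_nonneg_left (Real.abs_sin_le_one _)
                (le_of_lt (Real.rpow_pos_of_pos ht0 _))
          _ = t ^ (-(p*q)) := mul_one _
          _ ≤ (N:ℝ)^(-(p*q)) := Real.rpow_le_rpow_of_nonpos hNpos htN' (by nlinarith)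
      have hNp : (0:ℝ) < (N:ℝ)^(-p) := Real.rpow_pos_of_pos hNpos _
      have hNpq : (0:ℝ) < (N:ℝ)^(-(p*q)) := Real.rpow_pos_of_pos hNpos _
      obtain ⟨i, hilt, hidist⟩ := grid_cover hwpos hNp hx0pos.le (hx0 ▸ hxN)
      obtain ⟨k, hklt, hkdist⟩ := grid_cover hwpos (by linarith : (0:ℝ) < 2*(N:ℝ)^(-(p*q)))
        (by
          have := abs_le.1 hyN
          rw [← hx1] at this
          linarith [this.1] : (0:ℝ) ≤ x 1 + (N:ℝ)^(-(p*q)))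
        (by
          have := abs_le.1 hyN
          rw [← hx1] at this
          linarith [this.2])
      refine mem_sUnion.2 ⟨gtail (i, k), Or.inr (mem_image_of_mem _ ?_), ?_⟩
      · rw [Finset.mem_coe, hB, Finset.mem_product]
        exact ⟨Finset.mem_range.2 hilt, Finset.mem_range.2 hklt⟩
      · apply mem_SqD_of hδθ.le
        · rw [pt_apply0]
          have : |x 0 - ((i:ℝ)+1/2)*w| ≤ w/2 := by rw [hx0]; exact hidist
          calc |x 0 - ((i:ℝ)+1/2)*w| ≤ w/2 := this
            _ = δ^θ/4 := by rw [hw]; ring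
        · rw [pt_apply1]
          have heq : x 1 - (-(N:ℝ)^(-(p*q)) + ((k:ℝ)+1/2)*w)
              = (x 1 + (N:ℝ)^(-(p*q))) - ((k:ℝ)+1/2)*w := by ring
          rw [heq]
          calc |(x 1 + (N:ℝ)^(-(p*q))) - ((k:ℝ)+1/2)*w| ≤ w/2 := hkdist
            _ = δ^θ/4 := by rw [hw]; ring
  · -- diameters
    rintro U (⟨x, hxA, rfl⟩ | ⟨ik, hikB, rfl⟩)
    · rw [hfnear, diam_SqD _ hδ.le]
      exact ⟨le_refl _, hδδθ⟩
    · rw [hgtail, diam_SqD _ hδθ.le]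
      exact ⟨hδδθ, le_refl _⟩
  · -- the sum bound
    have hfin : ((fnear '' ↑A) ∪ (gtail '' ↑B)).Finite :=
      (A.finite_toSet.image fnear).union (B.finite_toSet.image gtail)
    set F : Set E2 → ENNReal := fun U => ENNReal.ofReal (diam U ^ s) with hF
    have step1 : ∑' (U : ↥((fnear '' ↑A) ∪ (gtail '' ↑B))), F ↑U
        ≤ ∑ U ∈ (A.image fnear ∪ B.image gtail), F U := by
      apply tsum_set_le _ hfin
      rintro U (⟨x, hx, rfl⟩ | ⟨y, hy, rfl⟩)
      · exact Finset.mem_union_left _ (Finset.mem_image_of_mem _ hx)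
      · exact Finset.mem_union_right _ (Finset.mem_image_of_mem _ hy)
    have step2 : ∑ U ∈ (A.image fnear ∪ B.image gtail), F U
        ≤ ∑ U ∈ A.image fnear, F U + ∑ U ∈ B.image gtail, F U := by
      have h := Finset.sum_union_inter (s₁ := A.image fnear) (s₂ := B.image gtail) (f := F)
      calc ∑ U ∈ (A.image fnear ∪ B.image gtail), F U
          ≤ ∑ U ∈ (A.image fnear ∪ B.image gtail), F U
            + ∑ U ∈ (A.image fnear ∩ B.image gtail), F U := le_self_add
        _ = _ := h
    have step3 : ∑ U ∈ A.image fnear, F U ≤ (A.card : ENNReal) * ENNReal.ofReal (δ^s) := by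
      calc ∑ U ∈ A.image fnear, F U ≤ ∑ x ∈ A, F (fnear x) := sum_image_le_ennreal A fnear F
        _ = ∑ _x ∈ A, ENNReal.ofReal (δ^s) := by
            apply Finset.sum_congr rfl
            intro x _
            rw [hF]
            simp only
            rw [hfnear]
            simp only
            rw [diam_SqD _ hδ.le]
        _ = (A.card : ENNReal) * ENNReal.ofReal (δ^s) := by
            rw [Finset.sum_const, nsmul_eq_mul]
    have step4 : ∑ U ∈ B.image gtail, F U ≤ (B.card : ENNReal) * ENNReal.ofReal ((δ^θ)^s) := by
      calc ∑ U ∈ B.image gtail, F U ≤ ∑ ik ∈ B, F (gtail ik) := sum_image_le_ennreal B gtail F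
        _ = ∑ _ik ∈ B, ENNReal.ofReal ((δ^θ)^s) := by
            apply Finset.sum_congr rfl
            intro ik _
            rw [hF]
            simp only
            rw [hgtail]
            simp only
            rw [diam_SqD _ hδθ.le]
        _ = (B.card : ENNReal) * ENNReal.ofReal ((δ^θ)^s) := by
            rw [Finset.sum_const, nsmul_eq_mul]
    -- real-number estimates
    set c₁ : ℝ := 1 + 1/(1-p*q) with hc₁
    have hc₁pos : 0 < c₁ := by
      rw [hc₁]
      have : 0 < 1 - p*q := by linarith
      positivity
    have hδs : (0:ℝ) < δ^s := Real.rpow_pos_of_pos hδ _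
    have hcardA : (A.card : ℝ) = ∑ n ∈ Finset.Icc 1 N, (m n : ℝ) := by
      rw [hA, Finset.card_sigma]
      push_cast
      apply Finset.sum_congr rfl
      intro n _
      rw [Finset.card_range]
    have hnear_real : (A.card : ℝ) * δ^s
        ≤ 16*C₀*c₁ * δ^(s-1-γ*(1-p*q)) + 2*δ^(s-γ) := by
      have hsum1 : ∑ n ∈ Finset.Icc 1 N, (m n : ℝ)
          ≤ (8*C₀/δ) * (c₁ * (N:ℝ)^(1-p*q)) + N := by
        calc ∑ n ∈ Finset.Icc 1 N, (m n : ℝ)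
            ≤ ∑ n ∈ Finset.Icc 1 N, (8*C₀*(n:ℝ)^(-(p*q))/δ + 1) := by
              apply Finset.sum_le_sum
              intro n hn
              exact hmub n (Finset.mem_Icc.1 hn).1
          _ = (8*C₀/δ) * (∑ n ∈ Finset.Icc 1 N, (n:ℝ)^(-(p*q))) + N := by
              rw [Finset.sum_add_distrib, Finset.sum_const, Nat.card_Icc,
                Nat.add_sub_cancel, nsmul_eq_mul, mul_one, Finset.mul_sum]
              congr 1
              exact Finset.sum_congr rfl (fun n _ => by ring)
          _ ≤ (8*C₀/δ) * (c₁ * (N:ℝ)^(1-p*q)) + N := by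
              have hβ := sum_rpow_le (mul_pos hp hq) hpq N hN1
              have h1 : (0:ℝ) ≤ 8*C₀/δ := by positivity
              nlinarith [hβ]
      have hNpow : (N:ℝ)^(1-p*q) ≤ 2 * δ^((-γ)*(1-p*q)) := by
        calc (N:ℝ)^(1-p*q) ≤ (2*δ^(-γ))^(1-p*q) :=
              Real.rpow_le_rpow (by positivity) hNub (by linarith)
          _ = 2^(1-p*q) * (δ^(-γ))^(1-p*q) :=
              Real.mul_rpow (by norm_num) (Real.rpow_pos_of_pos hδ _).le
          _ ≤ 2 * δ^((-γ)*(1-p*q)) := by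
              rw [← Real.rpow_mul hδ.le]
              apply mul_le_mul_of_nonneg_right _ (Real.rpow_pos_of_pos hδ _).le
              calc (2:ℝ)^(1-p*q) ≤ (2:ℝ)^(1:ℝ) :=
                    Real.rpow_le_rpow_of_exponent_le (by norm_num) (by nlinarith [mul_pos hp hq])
                _ = 2 := Real.rpow_one 2
      have hδs1 : δ^s/δ = δ^(s-1) := by
        rw [Real.rpow_sub_one hδ.ne']
      calc (A.card : ℝ) * δ^s ≤ ((8*C₀/δ) * (c₁ * (N:ℝ)^(1-p*q)) + N) * δ^s := by
            rw [hcardA]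
            exact mul_le_mul_of_nonneg_right hsum1 hδs.le
        _ = (8*C₀*c₁) * (N:ℝ)^(1-p*q) * (δ^s/δ) + (N:ℝ)*δ^s := by ring
        _ ≤ (8*C₀*c₁) * (2*δ^((-γ)*(1-p*q))) * (δ^(s-1)) + (2*δ^(-γ))*δ^s := by
            rw [hδs1]
            have t1 : (8*C₀*c₁) * (N:ℝ)^(1-p*q) * (δ^(s-1))
                ≤ (8*C₀*c₁) * (2*δ^((-γ)*(1-p*q))) * (δ^(s-1)) := by
              apply mul_le_mul_of_nonneg_right _ (Real.rpow_pos_of_pos hδ _).le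
              exact mul_le_mul_of_nonneg_left hNpow (by positivity)
            have t2 : (N:ℝ)*δ^s ≤ (2*δ^(-γ))*δ^s :=
              mul_le_mul_of_nonneg_right hNub hδs.le
            linarith
        _ = 16*C₀*c₁ * (δ^((-γ)*(1-p*q)) * δ^(s-1)) + 2*(δ^(-γ) * δ^s) := by ring
        _ = 16*C₀*c₁ * δ^(s-1-γ*(1-p*q)) + 2*δ^(s-γ) := by
            rw [← Real.rpow_add hδ, ← Real.rpow_add hδ]
            congr 2 <;> ring
    have htail_real : (B.card : ℝ) * (δ^θ)^s
        ≤ 8*δ^(γ*(p+p*q)-2*θ+θ*s) + 2*δ^(γ*p-θ+θ*s) + 4*δ^(γ*(p*q)-θ+θ*s) + δ^(θ*s) := by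
      have hcardB : (B.card : ℝ) = (mx:ℝ) * (my:ℝ) := by
        rw [hB, Finset.card_product]
        push_cast
        simp [Finset.card_range]
      have hNmp : (N:ℝ)^(-p) ≤ δ^(γ*p) := by
        calc (N:ℝ)^(-p) ≤ (δ^(-γ))^(-p) :=
              Real.rpow_le_rpow_of_nonpos (Real.rpow_pos_of_pos hδ _) hNlb (by linarith)
          _ = δ^(γ*p) := by
              rw [← Real.rpow_mul hδ.le]
              congr 1
              ring
      have hNmpq : (N:ℝ)^(-(p*q)) ≤ δ^(γ*(p*q)) := by
        calc (N:ℝ)^(-(p*q)) ≤ (δ^(-γ))^(-(p*q)) :=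
              Real.rpow_le_rpow_of_nonpos (Real.rpow_pos_of_pos hδ _) hNlb
                (by nlinarith [mul_pos hp hq])
          _ = δ^(γ*(p*q)) := by
              rw [← Real.rpow_mul hδ.le]
              congr 1
              ring
      have hwinv : 1/w = 2 * δ^(-θ) := by
        rw [hw, Real.rpow_neg hδ.le]
        field_simp
      have hmxub : (mx:ℝ) ≤ 2*δ^(γ*p)*δ^(-θ) + 1 := by
        have h1 := Nat.ceil_lt_add_one (show (0:ℝ) ≤ (N:ℝ)^(-p)/w by positivity)
        rw [← hmx] at h1
        have h2 : (N:ℝ)^(-p)/w ≤ 2*δ^(γ*p)*δ^(-θ) := by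
          rw [div_eq_mul_one_div, hwinv]
          calc (N:ℝ)^(-p) * (2*δ^(-θ)) ≤ δ^(γ*p) * (2*δ^(-θ)) :=
                mul_le_mul_of_nonneg_right hNmp (by positivity)
            _ = 2*δ^(γ*p)*δ^(-θ) := by ring
        linarith
      have hmyub : (my:ℝ) ≤ 4*δ^(γ*(p*q))*δ^(-θ) + 1 := by
        have h1 := Nat.ceil_lt_add_one (show (0:ℝ) ≤ 2*(N:ℝ)^(-(p*q))/w by positivity)
        rw [← hmy] at h1
        have h2 : 2*(N:ℝ)^(-(p*q))/w ≤ 4*δ^(γ*(p*q))*δ^(-θ) := by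
          rw [div_eq_mul_one_div, hwinv]
          calc 2*(N:ℝ)^(-(p*q)) * (2*δ^(-θ)) ≤ 2*δ^(γ*(p*q)) * (2*δ^(-θ)) := by
                apply mul_le_mul_of_nonneg_right _ (by positivity)
                linarith [hNmpq]
            _ = 4*δ^(γ*(p*q))*δ^(-θ) := by ring
        linarith
      have hθs : (δ^θ)^s = δ^(θ*s) := by
        rw [← Real.rpow_mul hδ.le]
      have hmerge1 : δ^(γ*p) * δ^(-θ) * (δ^(γ*(p*q)) * δ^(-θ) * δ^(θ*s))
          = δ^(γ*(p+p*q)-2*θ+θ*s) := by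
        rw [← Real.rpow_add hδ, ← Real.rpow_add hδ, ← Real.rpow_add hδ, ← Real.rpow_add hδ]
        congr 1
        ring
      have hmerge2 : δ^(γ*p) * δ^(-θ) * δ^(θ*s) = δ^(γ*p-θ+θ*s) := by
        rw [← Real.rpow_add hδ, ← Real.rpow_add hδ]
        congr 1 <;> ring_nf
      have hmerge3 : δ^(γ*(p*q)) * δ^(-θ) * δ^(θ*s) = δ^(γ*(p*q)-θ+θ*s) := by
        rw [← Real.rpow_add hδ, ← Real.rpow_add hδ]
        congr 1 <;> ring_nf
      have hmx0 : (0:ℝ) ≤ (mx:ℝ) := Nat.cast_nonneg _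
      have hmy0 : (0:ℝ) ≤ (my:ℝ) := Nat.cast_nonneg _
      have hδθs : (0:ℝ) < δ^(θ*s) := Real.rpow_pos_of_pos hδ _
      have hABpos : (0:ℝ) ≤ 2*δ^(γ*p)*δ^(-θ) + 1 := by positivity
      calc (B.card : ℝ) * (δ^θ)^s = (mx:ℝ)*(my:ℝ)*δ^(θ*s) := by rw [hcardB, hθs]
        _ ≤ (2*δ^(γ*p)*δ^(-θ) + 1)*(4*δ^(γ*(p*q))*δ^(-θ) + 1)*δ^(θ*s) := by
            apply mul_le_mul_of_nonneg_right _ hδθs.le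
            exact mul_le_mul hmxub hmyub hmy0 hABpos
        _ = 8*(δ^(γ*p) * δ^(-θ) * (δ^(γ*(p*q)) * δ^(-θ) * δ^(θ*s)))
            + 2*(δ^(γ*p) * δ^(-θ) * δ^(θ*s)) + 4*(δ^(γ*(p*q)) * δ^(-θ) * δ^(θ*s))
            + δ^(θ*s) := by ring
        _ = 8*δ^(γ*(p+p*q)-2*θ+θ*s) + 2*δ^(γ*p-θ+θ*s) + 4*δ^(γ*(p*q)-θ+θ*s) + δ^(θ*s) := by
            rw [hmerge1, hmerge2, hmerge3]
    -- put it together in ENNReal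
    calc ∑' (U : ↥((fnear '' ↑A) ∪ (gtail '' ↑B))), ENNReal.ofReal (diam (U : Set E2) ^ s)
        ≤ ∑ U ∈ A.image fnear, F U + ∑ U ∈ B.image gtail, F U := le_trans step1 step2
      _ ≤ (A.card : ENNReal) * ENNReal.ofReal (δ^s)
          + (B.card : ENNReal) * ENNReal.ofReal ((δ^θ)^s) := add_le_add step3 step4
      _ = ENNReal.ofReal ((A.card : ℝ) * δ^s) + ENNReal.ofReal ((B.card : ℝ) * (δ^θ)^s) := by
          rw [ENNReal.ofReal_mul (Nat.cast_nonneg _), ENNReal.ofReal_mul (Nat.cast_nonneg _)]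
          rw [ENNReal.ofReal_natCast, ENNReal.ofReal_natCast]
      _ ≤ ENNReal.ofReal (16*C₀*c₁ * δ^(s-1-γ*(1-p*q)) + 2*δ^(s-γ))
          + ENNReal.ofReal (8*δ^(γ*(p+p*q)-2*θ+θ*s) + 2*δ^(γ*p-θ+θ*s)
            + 4*δ^(γ*(p*q)-θ+θ*s) + δ^(θ*s)) :=
          add_le_add (ENNReal.ofReal_le_ofReal hnear_real) (ENNReal.ofReal_le_ofReal htail_real)
      _ = ENNReal.ofReal (16*(p+p*q+4)*(1+1/(1-p*q)) * δ^(s-1-γ*(1-p*q)) + 2*δ^(s-γ)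
          + 8*δ^(γ*(p+p*q)-2*θ+θ*s) + 2*δ^(γ*p-θ+θ*s) + 4*δ^(γ*(p*q)-θ+θ*s) + δ^(θ*s)) := by
          rw [← ENNReal.ofReal_add]
          · congr 1
            rw [hC₀, hc₁]
            ring
          · positivity
          · positivity



lemma upper_mem (p q θ s : ℝ) (hp : 0 < p) (hq : 0 < q) (hpq : p * q < 1)
    (hθ : 0 < θ) (hθ' : θ ≤ 1)
    (hs : (p*(1+q) + 2*θ*(1-p*q)) / (p*(1+q) + θ*(1-p*q)) < s) :
    0 ≤ s ∧ ∀ ε : ℝ, 0 < ε → ∃ δ₀ : ℝ, 0 < δ₀ ∧ ∀ δ : ℝ, 0 < δ → δ < δ₀ →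
    ∃ 𝒰 : Set (Set E2), 𝒰.Countable ∧ attenTopSine p q ⊆ ⋃₀ 𝒰 ∧
      (∀ U ∈ 𝒰, δ ≤ diam U ∧ diam U ≤ δ ^ θ) ∧
      ∑' U : 𝒰, ENNReal.ofReal (diam (U : Set E2) ^ s) ≤ ENNReal.ofReal ε := by
  have hpq' : 0 < 1 - p*q := by linarith
  set D : ℝ := p*(1+q) + θ*(1-p*q) with hD
  have hDpos : 0 < D := by rw [hD]; positivity
  set γ : ℝ := θ / D with hγdef
  have hγ : 0 < γ := by rw [hγdef]; positivity
  have hsD : p*(1+q) + 2*θ*(1-p*q) < s * D := by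
    have := (div_lt_iff₀ hDpos).1 hs
    linarith
  have hs1 : 1 < s := by
    have h1 : D < p*(1+q) + 2*θ*(1-p*q) := by
      rw [hD]; nlinarith [mul_pos hθ hpq']
    nlinarith [hDpos]
  have hs0 : 0 ≤ s := by linarith
  have E1pos : 0 < s-1-γ*(1-p*q) := by
    rw [hγdef, show s-1-(θ/D)*(1-p*q) = (s*D - D - θ*(1-p*q))/D by field_simp]
    apply div_pos _ hDpos
    rw [hD]
    nlinarith
  have hγ1 : γ < 1 := by
    rw [hγdef, div_lt_one hDpos, hD]
    nlinarith [mul_pos hp hq, mul_pos hθ (mul_pos hp hq)]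
  have E2pos : 0 < s - γ := by linarith
  have E3pos : 0 < γ*(p+p*q)-2*θ+θ*s := by
    rw [hγdef, show (θ/D)*(p+p*q)-2*θ+θ*s = (θ*(p+p*q) - 2*θ*D + θ*s*D)/D by field_simp]
    apply div_pos _ hDpos
    have key : 0 < θ * (s*D - (p*(1+q) + 2*θ*(1-p*q))) := mul_pos hθ (by linarith)
    rw [hD] at *
    nlinarith [key]
  have E4pos : 0 < γ*p-θ+θ*s := by
    rw [hγdef, show (θ/D)*p-θ+θ*s = (θ*p - θ*D + θ*s*D)/D by field_simp]
    apply div_pos _ hDpos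
    have key : 0 < θ * (p + D*(s-1)) := mul_pos hθ (by nlinarith [hDpos])
    nlinarith [key]
  have E5pos : 0 < γ*(p*q)-θ+θ*s := by
    rw [hγdef, show (θ/D)*(p*q)-θ+θ*s = (θ*(p*q) - θ*D + θ*s*D)/D by field_simp]
    apply div_pos _ hDpos
    have key : 0 < θ * (p*q + D*(s-1)) :=
      mul_pos hθ (by nlinarith [hDpos, mul_pos hp hq])
    nlinarith [key]
  have E6pos : 0 < θ*s := by nlinarith
  refine ⟨hs0, ?_⟩
  intro ε hε
  have hε6 : 0 < ε/6 := by linarith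
  have ev1 : ∀ᶠ δ in nhdsWithin (0:ℝ) (Set.Ioi 0), δ < 1 := by
    have := eventually_rpow_le 1 one_pos (show (0:ℝ) < 1/2 by norm_num)
    exact this.mono (fun δ h => by rw [Real.rpow_one, one_mul] at h; linarith)
  have ev2 := eventually_rpow_le (16*(p+p*q+4)*(1+1/(1-p*q))) E1pos hε6
  have ev3 := eventually_rpow_le 2 E2pos hε6
  have ev4 := eventually_rpow_le 8 E3pos hε6
  have ev5 := eventually_rpow_le 2 E4pos hε6
  have ev6 := eventually_rpow_le 4 E5pos hε6
  have ev7 := eventually_rpow_le 1 E6pos hε6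
  obtain ⟨δ₀, hδ₀, hP⟩ := exists_delta0
    (ev1.and (ev2.and (ev3.and (ev4.and (ev5.and (ev6.and ev7))))))
  refine ⟨δ₀, hδ₀, ?_⟩
  intro δ hδ hδlt
  obtain ⟨h1, h2, h3, h4, h5, h6, h7⟩ := hP δ hδ hδlt
  obtain ⟨𝒰, hc, hcov, hdiam, hsum⟩ :=
    upper_cover p q θ s γ hp hq hpq hθ hθ' hγ δ hδ h1
  refine ⟨𝒰, hc, hcov, hdiam, hsum.trans (ENNReal.ofReal_le_ofReal ?_)⟩
  rw [one_mul] at h7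
  linarith



lemma lower_count (p q θ s δ : ℝ) (hp : 0 < p) (hq : 0 < q) (hpq : p*q < 1)
    (hθ : 0 < θ) (hθ' : θ ≤ 1) (hδ : 0 < δ) (hδ1 : δ < 1)
    (hs0 : 0 ≤ s) (hs2 : s ≤ 2)
    (N K : ℕ) (hN1 : 1 ≤ N) (hK1 : 1 ≤ K)
    (g : ℝ) (hgdef : g = (p/2) * (2*(N:ℝ))^(-p-1))
    (hKub : 2*δ*K ≤ (2*(N:ℝ))^(-(p*q)))
    (HA : (δ^θ)^(2-s) ≤ (N:ℝ)*(K:ℝ)*δ*g/4)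
    (HB1 : δ^(1-s) ≤ (N:ℝ)*(K:ℝ)*g/8) (HB2 : (δ^θ)^(1-s) ≤ (N:ℝ)*(K:ℝ)*g/8)
    (HC1 : δ^(1-s) ≤ (N:ℝ)*(K:ℝ)*δ/4) (HC2 : (δ^θ)^(1-s) ≤ (N:ℝ)*(K:ℝ)*δ/4)
    (HD : 8 ≤ (N:ℝ)*(K:ℝ)*δ^s)
    (𝒰 : Set (Set E2)) (hcov : attenTopSine p q ⊆ ⋃₀ 𝒰)
    (hdiam : ∀ U ∈ 𝒰, δ ≤ diam U ∧ diam U ≤ δ^θ) :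
    ENNReal.ofReal 2 ≤ ∑' U : 𝒰, ENNReal.ofReal (diam (U : Set E2) ^ s) := by
  classical
  have hNR : (1:ℝ) ≤ (N:ℝ) := by exact_mod_cast hN1
  have hKR : (1:ℝ) ≤ (K:ℝ) := by exact_mod_cast hK1
  have h2N : (0:ℝ) < 2*(N:ℝ) := by linarith
  have hgpos : 0 < g := by
    rw [hgdef]
    have := Real.rpow_pos_of_pos h2N (-p-1)
    positivity
  have hNK0 : (0:ℝ) < (N:ℝ)*(K:ℝ) := by nlinarith
  -- the main pointwise estimate
  have Hmain : ∀ r : ℝ, δ ≤ r → r ≤ δ^θ →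
      (r/g + 1)*(r/(2*δ) + 1) ≤ ((N:ℝ)*(K:ℝ)/2)*r^s := by
    intro r hrl hru
    have hr0 : 0 < r := lt_of_lt_of_le hδ hrl
    have hrs : (0:ℝ) < r^s := Real.rpow_pos_of_pos hr0 _
    have hid1 : r^(1-s)*r^s = r := by
      rw [← Real.rpow_add hr0, show (1-s)+s = (1:ℝ) by ring, Real.rpow_one]
    have hid2 : r^(2-s)*r^s = r*r := by
      rw [← Real.rpow_add hr0, show (2-s)+s = (2:ℝ) by ring,
        show (2:ℝ) = ((2:ℕ):ℝ) by norm_num, Real.rpow_natCast]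
      ring
    have hr1smax : r^(1-s) ≤ max (δ^(1-s)) ((δ^θ)^(1-s)) := by
      rcases le_or_gt (1-s) 0 with h | h
      · exact le_trans (Real.rpow_le_rpow_of_nonpos hδ hrl h) (le_max_left _ _)
      · exact le_trans (Real.rpow_le_rpow hr0.le hru h.le) (le_max_right _ _)
    have T4 : (1:ℝ) ≤ ((N:ℝ)*(K:ℝ)/8)*r^s := by
      have h1 : δ^s ≤ r^s := Real.rpow_le_rpow hδ.le hrl hs0
      nlinarith [mul_le_mul_of_nonneg_left h1 hNK0.le]
    have T3 : r/g ≤ ((N:ℝ)*(K:ℝ)/8)*r^s := by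
      rw [div_le_iff₀ hgpos]
      calc r = r^(1-s)*r^s := hid1.symm
        _ ≤ ((N:ℝ)*(K:ℝ)*g/8)*r^s := by
            apply mul_le_mul_of_nonneg_right _ hrs.le
            exact hr1smax.trans (max_le HB1 HB2)
        _ = ((N:ℝ)*(K:ℝ)/8)*r^s*g := by ring
    have T2 : r/(2*δ) ≤ ((N:ℝ)*(K:ℝ)/8)*r^s := by
      rw [div_le_iff₀ (by linarith : (0:ℝ) < 2*δ)]
      calc r = r^(1-s)*r^s := hid1.symm
        _ ≤ ((N:ℝ)*(K:ℝ)*δ/4)*r^s := by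
            apply mul_le_mul_of_nonneg_right _ hrs.le
            exact hr1smax.trans (max_le HC1 HC2)
        _ = ((N:ℝ)*(K:ℝ)/8)*r^s*(2*δ) := by ring
    have T1 : (r/g)*(r/(2*δ)) ≤ ((N:ℝ)*(K:ℝ)/8)*r^s := by
      rw [div_mul_div_comm, div_le_iff₀ (by positivity : (0:ℝ) < g*(2*δ))]
      calc r*r = r^(2-s)*r^s := hid2.symm
        _ ≤ ((N:ℝ)*(K:ℝ)*δ*g/4)*r^s := by
            apply mul_le_mul_of_nonneg_right _ hrs.le
            exact le_trans (Real.rpow_le_rpow hr0.le hru (by linarith)) HA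
        _ = ((N:ℝ)*(K:ℝ)/8)*r^s*(g*(2*δ)) := by ring
    nlinarith [T1, T2, T3, T4]
  -- index set and points
  set I : Finset (ℕ×ℕ) := Finset.Icc N (2*N-1) ×ˢ Finset.Icc 1 K with hI
  have hIcard : I.card = N * K := by
    rw [hI, Finset.card_product, Nat.card_Icc, Nat.card_Icc]
    congr 1 <;> omega
  have hImem : ∀ nj : ℕ×ℕ, nj ∈ I ↔ (N ≤ nj.1 ∧ nj.1 ≤ 2*N-1 ∧ 1 ≤ nj.2 ∧ nj.2 ≤ K) := by
    intro nj
    rw [hI, Finset.mem_product, Finset.mem_Icc, Finset.mem_Icc]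
    tauto
  have hex : ∀ nj : ℕ×ℕ, ∃ t : ℝ, nj ∈ I →
      (t ∈ Icc (nj.1:ℝ) ((nj.1:ℝ)+1/2) ∧ Yf p q t = (2*δ*nj.2) * (-1:ℝ)^nj.1) := by
    intro nj
    by_cases h : nj ∈ I
    · obtain ⟨h1, h2, h3, h4⟩ := (hImem nj).1 h
      have hn1 : 1 ≤ nj.1 := le_trans hN1 h1
      have hjK : (nj.2:ℝ) ≤ (K:ℝ) := by exact_mod_cast h4
      have hcast : ((nj.1:ℝ)+1/2) ≤ 2*(N:ℝ) := by
        have : (nj.1:ℝ) ≤ ((2*N-1:ℕ):ℝ) := by exact_mod_cast h2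
        have h2N1 : ((2*N-1:ℕ):ℝ) = 2*(N:ℝ)-1 := by
          have : 1 ≤ 2*N := by omega
          push_cast [this]
          ring
        rw [h2N1] at this
        linarith
      have hv' : 2*δ*(nj.2:ℝ) ≤ ((nj.1:ℝ) + 1/2) ^ (-(p*q)) := by
        calc 2*δ*(nj.2:ℝ) ≤ 2*δ*(K:ℝ) := by nlinarith
          _ ≤ (2*(N:ℝ))^(-(p*q)) := hKub
          _ ≤ ((nj.1:ℝ) + 1/2) ^ (-(p*q)) := by
              apply Real.rpow_le_rpow_of_nonpos _ hcast (by nlinarith)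
              have : (1:ℝ) ≤ (nj.1:ℝ) := by exact_mod_cast hn1
              linarith
      obtain ⟨t, ht, hYt⟩ := exists_Yf_eq (p := p) (q := q) nj.1 hn1
        (by positivity : (0:ℝ) ≤ 2*δ*(nj.2:ℝ)) hv'
      exact ⟨t, fun _ => ⟨ht, hYt⟩⟩
    · exact ⟨0, fun hm => absurd hm h⟩
  choose T hT using hex
  set P : ℕ×ℕ → E2 := fun nj => pt (Xf p (T nj)) (Yf p q (T nj)) with hPdef
  have hTlb : ∀ nj ∈ I, ((nj.1:ℝ)) ≤ T nj := fun nj h => (hT nj h).1.1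
  have hTub : ∀ nj ∈ I, T nj ≤ (nj.1:ℝ)+1/2 := fun nj h => (hT nj h).1.2
  have hT1 : ∀ nj ∈ I, (1:ℝ) ≤ T nj := by
    intro nj h
    have h1 := ((hImem nj).1 h).1
    have : (1:ℝ) ≤ (nj.1:ℝ) := by
      have : 1 ≤ nj.1 := le_trans hN1 h1
      exact_mod_cast this
    linarith [hTlb nj h]
  have hPcurve : ∀ nj ∈ I, P nj ∈ attenTopSine p q := by
    intro nj h
    exact ⟨T nj, hT1 nj h, by simp [hPdef, Xf], by simp [hPdef, Yf]⟩
  -- choose covering sets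
  have hUex : ∀ nj : ℕ×ℕ, ∃ W : Set E2, nj ∈ I → (W ∈ 𝒰 ∧ P nj ∈ W) := by
    intro nj
    by_cases h : nj ∈ I
    · obtain ⟨W, hW, hPW⟩ := mem_sUnion.1 (hcov (hPcurve nj h))
      exact ⟨W, fun _ => ⟨hW, hPW⟩⟩
    · exact ⟨∅, fun hm => absurd hm h⟩
  choose V hV using hUex
  have hN1mem : ((N, 1) : ℕ×ℕ) ∈ I := by
    rw [hImem]
    refine ⟨le_refl _, by omega, le_refl _, hK1⟩
  have hU0 : V (N,1) ∈ 𝒰 := (hV _ hN1mem).1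
  set Vh : ℕ×ℕ → ↥𝒰 := fun nj => if h : nj ∈ I then ⟨V nj, (hV nj h).1⟩ else ⟨V (N,1), hU0⟩
    with hVhdef
  have hVh1 : ∀ nj ∈ I, (Vh nj : Set E2) = V nj := by
    intro nj h
    simp only [hVhdef, dif_pos h]
  -- fiberwise counting
  have hfib := Finset.card_eq_sum_card_fiberwise
    (f := Vh) (s := I) (t := I.image Vh) (fun x hx => Finset.mem_image_of_mem _ hx)
  have hfibbound : ∀ u ∈ I.image Vh,
      (((I.filter (fun nj => Vh nj = u)).card : ℝ)) ≤
        ((N:ℝ)*(K:ℝ)/2) * (diam (u:Set E2))^s := by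
    intro u _
    have hWU : (u : Set E2) ∈ 𝒰 := u.2
    obtain ⟨hrlb, hrub⟩ := hdiam _ hWU
    set r := diam (u : Set E2) with hrdef
    have hr0 : 0 < r := lt_of_lt_of_le hδ hrlb
    have hWbdd : Bornology.IsBounded (u : Set E2) := by
      by_contra hcon
      rw [diam_eq_zero_of_unbounded hcon] at hrdef
      rw [hrdef] at hr0
      exact lt_irrefl _ hr0
    set Fb := I.filter (fun nj => Vh nj = u) with hFbdef
    have hmemW : ∀ nj ∈ Fb, nj ∈ I ∧ P nj ∈ (u : Set E2) := by
      intro nj hnj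
      obtain ⟨hnjI, hVeq⟩ := Finset.mem_filter.1 hnj
      refine ⟨hnjI, ?_⟩
      have hcoe : V nj = (u : Set E2) := by
        rw [← hVh1 nj hnjI, hVeq]
      rw [← hcoe]
      exact (hV nj hnjI).2
    -- distances within W are at most r
    have hdistr : ∀ a ∈ Fb, ∀ b ∈ Fb, dist (P a) (P b) ≤ r := by
      intro a ha b hb
      exact dist_le_diam_of_mem hWbdd (hmemW a ha).2 (hmemW b hb).2
    -- x-separation
    have hsepx : ∀ a ∈ Fb, ∀ b ∈ Fb, b.1 ≤ a.1 + ⌊r/g⌋₊ := by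
      intro a ha b hb
      rcases le_or_gt b.1 a.1 with h | h
      · omega
      have haI := (hmemW a ha).1
      have hbI := (hmemW b hb).1
      obtain ⟨ha1, ha2, _, _⟩ := (hImem a).1 haI
      obtain ⟨hb1, hb2, _, _⟩ := (hImem b).1 hbI
      have hTa0 : (0:ℝ) < T a := lt_of_lt_of_le one_pos (hT1 a haI)
      have hTb0 : (0:ℝ) < T b := lt_of_lt_of_le one_pos (hT1 b hbI)
      -- x-coordinates
      have hxa : ((a.1:ℝ)+1/2)^(-p) ≤ Xf p (T a) :=
        Real.rpow_le_rpow_of_nonpos hTa0 (hTub a haI) (by linarith)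
      have hxb : Xf p (T b) ≤ ((b.1:ℝ))^(-p) := by
        apply Real.rpow_le_rpow_of_nonpos _ (hTlb b hbI) (by linarith)
        have h1b : 1 ≤ b.1 := le_trans hN1 hb1
        have : (1:ℝ) ≤ (b.1:ℝ) := by exact_mod_cast h1b
        linarith
      have hcast2N : ((b.1:ℝ)) ≤ 2*(N:ℝ) := by
        have : (b.1:ℝ) ≤ ((2*N-1:ℕ):ℝ) := by exact_mod_cast hb2
        have h2N1 : ((2*N-1:ℕ):ℝ) = 2*(N:ℝ)-1 := by
          have : 1 ≤ 2*N := by omega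
          push_cast [this]
          ring
        rw [h2N1] at this
        linarith
      have hab : (a.1:ℝ)+1/2 ≤ (b.1:ℝ) := by
        have : (a.1:ℝ) + 1 ≤ (b.1:ℝ) := by exact_mod_cast h
        linarith
      have hgap := rpow_neg_gap hp
        (by
          have h1a : 1 ≤ a.1 := le_trans hN1 ha1
          have : (1:ℝ) ≤ (a.1:ℝ) := by exact_mod_cast h1a
          linarith : (1:ℝ) ≤ (a.1:ℝ)+1/2)
        hab hcast2N
      -- gap yields separation
      have hd1 : |P a 0 - P b 0| ≤ r := le_trans (abs_coord0_le_dist _ _) (hdistr a ha b hb)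
      have hPa0 : P a 0 = Xf p (T a) := by simp [hPdef]
      have hPb0 : P b 0 = Xf p (T b) := by simp [hPdef]
      have hdiff : (b.1:ℝ) - (a.1:ℝ) - 1/2 ≥ ((b.1:ℝ) - (a.1:ℝ))/2 := by
        have : (1:ℝ) ≤ (b.1:ℝ) - (a.1:ℝ) := by
          have : (a.1:ℝ) + 1 ≤ (b.1:ℝ) := by exact_mod_cast h
          linarith
        linarith
      have hsep : g * ((b.1:ℝ) - (a.1:ℝ)) ≤ Xf p (T a) - Xf p (T b) := by
        have e1 : p * (2*(N:ℝ))^(-p-1) * ((b.1:ℝ) - ((a.1:ℝ)+1/2))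
            ≤ ((a.1:ℝ)+1/2)^(-p) - ((b.1:ℝ))^(-p) := hgap
        have e2 : g * ((b.1:ℝ) - (a.1:ℝ)) ≤ p * (2*(N:ℝ))^(-p-1) * ((b.1:ℝ) - ((a.1:ℝ)+1/2)) := by
          rw [hgdef]
          have hpw : (0:ℝ) < (2*(N:ℝ))^(-p-1) := Real.rpow_pos_of_pos h2N _
          nlinarith [hdiff, hpw, mul_pos hp hpw]
        have e3 : ((a.1:ℝ)+1/2)^(-p) - ((b.1:ℝ))^(-p) ≤ Xf p (T a) - Xf p (T b) := by
          linarith [hxa, hxb]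
        linarith
      have habs : g * ((b.1:ℝ) - (a.1:ℝ)) ≤ r := by
        have := hd1
        rw [hPa0, hPb0] at this
        have h2 : Xf p (T a) - Xf p (T b) ≤ |Xf p (T a) - Xf p (T b)| := le_abs_self _
        linarith
      have : ((b.1 - a.1 : ℕ) : ℝ) ≤ r/g := by
        have hcast : ((b.1 - a.1 : ℕ) : ℝ) = (b.1:ℝ) - (a.1:ℝ) := by
          have : a.1 ≤ b.1 := le_of_lt h
          push_cast [this]
          ring
        rw [hcast, le_div_iff₀ hgpos]
        linarith [habs]
      have := Nat.le_floor this
      omega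
    -- y-separation within the same n
    have hsepy : ∀ a ∈ Fb, ∀ b ∈ Fb, a.1 = b.1 → b.2 ≤ a.2 + ⌊r/(2*δ)⌋₊ := by
      intro a ha b hb hfst
      rcases le_or_gt b.2 a.2 with h | h
      · omega
      have haI := (hmemW a ha).1
      have hbI := (hmemW b hb).1
      have hya : P a 1 = (2*δ*(a.2:ℝ)) * (-1:ℝ)^a.1 := by
        simp only [hPdef, pt_apply1]
        exact (hT a haI).2
      have hyb : P b 1 = (2*δ*(b.2:ℝ)) * (-1:ℝ)^b.1 := by
        simp only [hPdef, pt_apply1]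
        exact (hT b hbI).2
      have hd1 : |P a 1 - P b 1| ≤ r := le_trans (abs_coord1_le_dist _ _) (hdistr a ha b hb)
      have hdiffy : |P a 1 - P b 1| = 2*δ*((b.2:ℝ) - (a.2:ℝ)) := by
        rw [hya, hyb, hfst]
        rw [show (2*δ*(a.2:ℝ)) * (-1:ℝ)^b.1 - (2*δ*(b.2:ℝ)) * (-1:ℝ)^b.1
          = -(2*δ*((b.2:ℝ) - (a.2:ℝ))) * (-1:ℝ)^b.1 by ring]
        rw [abs_mul, abs_neg]
        have hba : (0:ℝ) ≤ 2*δ*((b.2:ℝ) - (a.2:ℝ)) := by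
          have : (a.2:ℝ) ≤ (b.2:ℝ) := by exact_mod_cast le_of_lt h
          nlinarith
        rw [abs_of_nonneg hba]
        rcases neg_one_pow_eq_one_iff_even (by norm_num : (-1:ℝ) ≠ 1) |>.mpr.mt with _
        · rcases Nat.even_or_odd b.1 with he | ho
          · rw [he.neg_one_pow, abs_one, mul_one]
          · rw [ho.neg_one_pow, abs_neg, abs_one, mul_one]
      have : ((b.2 - a.2 : ℕ) : ℝ) ≤ r/(2*δ) := by
        have hcast : ((b.2 - a.2 : ℕ) : ℝ) = (b.2:ℝ) - (a.2:ℝ) := by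
          have : a.2 ≤ b.2 := le_of_lt h
          push_cast [this]
          ring
        rw [hcast, le_div_iff₀ (by linarith : (0:ℝ) < 2*δ)]
        rw [hdiffy] at hd1
        linarith
      have := Nat.le_floor this
      omega
    -- cardinality bound
    have hcard1 : Fb.card ≤ (⌊r/(2*δ)⌋₊ + 1) * (⌊r/g⌋₊ + 1) := by
      have hfibers : ∀ n0 ∈ Fb.image Prod.fst,
          (Fb.filter (fun x => x.1 = n0)).card ≤ ⌊r/(2*δ)⌋₊ + 1 := by
        intro n0 _
        set Sf := Fb.filter (fun x => x.1 = n0) with hSf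
        have hinj : Set.InjOn Prod.snd (Sf : Set (ℕ×ℕ)) := by
          intro x hx y hy hxy
          have hx1 := (Finset.mem_filter.1 (Finset.mem_coe.1 hx)).2
          have hy1 := (Finset.mem_filter.1 (Finset.mem_coe.1 hy)).2
          exact Prod.ext (hx1.trans hy1.symm) hxy
        rw [← Finset.card_image_of_injOn hinj]
        apply card_le_of_window
        intro j1 hj1 j2 hj2
        obtain ⟨x, hx, hxj⟩ := Finset.mem_image.1 hj1
        obtain ⟨y, hy, hyj⟩ := Finset.mem_image.1 hj2
        have hxF := Finset.mem_filter.1 hx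
        have hyF := Finset.mem_filter.1 hy
        have := hsepy x hxF.1 y hyF.1 (hxF.2.trans hyF.2.symm)
        omega
      have h1 := Finset.card_le_mul_card_image (f := Prod.fst) Fb (⌊r/(2*δ)⌋₊ + 1) (by
        intro a ha
        exact hfibers a ha)
      have h2 : (Fb.image Prod.fst).card ≤ ⌊r/g⌋₊ + 1 := by
        apply card_le_of_window
        intro n1 hn1 n2 hn2
        obtain ⟨x, hx, hxn⟩ := Finset.mem_image.1 hn1
        obtain ⟨y, hy, hyn⟩ := Finset.mem_image.1 hn2
        have := hsepx x hx y hy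
        omega
      calc Fb.card ≤ (⌊r/(2*δ)⌋₊ + 1) * (Fb.image Prod.fst).card := h1
        _ ≤ (⌊r/(2*δ)⌋₊ + 1) * (⌊r/g⌋₊ + 1) := by
            apply Nat.mul_le_mul_left
            exact h2
    -- to the reals
    have hfloor1 : (⌊r/(2*δ)⌋₊ : ℝ) ≤ r/(2*δ) := Nat.floor_le (by positivity)
    have hfloor2 : (⌊r/g⌋₊ : ℝ) ≤ r/g := Nat.floor_le (by positivity)
    calc ((Fb.card : ℝ)) ≤ ((⌊r/(2*δ)⌋₊ + 1) * (⌊r/g⌋₊ + 1) : ℕ) := by exact_mod_cast hcard1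
      _ = ((⌊r/(2*δ)⌋₊:ℝ) + 1) * ((⌊r/g⌋₊:ℝ) + 1) := by push_cast; ring
      _ ≤ (r/(2*δ) + 1) * (r/g + 1) := by
          apply mul_le_mul (by linarith) (by linarith) (by positivity) (by positivity)
      _ = (r/g + 1)*(r/(2*δ) + 1) := by ring
      _ ≤ ((N:ℝ)*(K:ℝ)/2)*r^s := Hmain r hrlb hrub
  -- conclude
  have hsum_real : (2:ℝ) ≤ ∑ u ∈ I.image Vh, (diam (u:Set E2))^s := by
    have h1 : ((I.card : ℕ) : ℝ) = ∑ u ∈ I.image Vh,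
        ((I.filter (fun nj => Vh nj = u)).card : ℝ) := by
      rw [hfib]
      push_cast
      rfl
    have h2 : ((I.card : ℕ) : ℝ) ≤ ((N:ℝ)*(K:ℝ)/2) * ∑ u ∈ I.image Vh, (diam (u:Set E2))^s := by
      rw [h1, Finset.mul_sum]
      exact Finset.sum_le_sum hfibbound
    have h3 : ((I.card : ℕ) : ℝ) = (N:ℝ)*(K:ℝ) := by
      rw [hIcard]
      push_cast
      ring
    rw [h3] at h2
    nlinarith [h2, hNK0]
  calc ENNReal.ofReal 2 ≤ ENNReal.ofReal (∑ u ∈ I.image Vh, (diam (u:Set E2))^s) :=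
        ENNReal.ofReal_le_ofReal hsum_real
    _ = ∑ u ∈ I.image Vh, ENNReal.ofReal ((diam (u:Set E2))^s) :=
        ENNReal.ofReal_sum_of_nonneg (fun u _ => Real.rpow_nonneg diam_nonneg _)
    _ ≤ ∑' U : 𝒰, ENNReal.ofReal (diam (U : Set E2) ^ s) := ENNReal.sum_le_tsum _



lemma lower_exponents (p q θ s D γ : ℝ) (hp : 0 < p) (hq : 0 < q) (hpq : p*q < 1)
    (hθ : 0 < θ) (hθ' : θ ≤ 1)
    (hD : D = p*(1+q) + θ*(1-p*q)) (hγ : γ = θ/D)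
    (hcon : s < (p*(1+q) + 2*θ*(1-p*q))/D) :
    0 < D ∧ 0 < γ ∧ γ < 1 ∧ s < 2 ∧
    0 < 1 - γ*(p*q) ∧ 0 < θ*(2-s) - γ*(p+p*q) ∧ 0 < 2-s-γ*(p+p*q) ∧
    0 < θ*(1-s)+1-γ*(p+p*q) ∧ 0 < 1-s+γ*(1-p*q) := by
  have hpq' : 0 < 1 - p*q := by linarith
  have ha : 0 < p*(1+q) := by positivity
  have hB : 0 < θ*(1-p*q) := mul_pos hθ hpq'
  have hDpos : 0 < D := by rw [hD]; positivity
  subst hγ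
  have hγpos : 0 < θ/D := by positivity
  have hsD : s*D < p*(1+q) + 2*θ*(1-p*q) := by
    have := (lt_div_iff₀ hDpos).1 hcon
    linarith
  have hγ1 : θ/D < 1 := by
    rw [div_lt_one hDpos, hD]
    nlinarith [mul_pos hp hq, mul_pos hθ (mul_pos hp hq)]
  have hs2 : s < 2 := by
    have h1 : s*D < 2*D := by nlinarith [hsD, ha, hD]
    exact lt_of_mul_lt_mul_right h1 hDpos.le
  have P2 : 0 < 1 - (θ/D)*(p*q) := by
    have := mul_le_mul_of_nonneg_right hγ1.le (le_of_lt (mul_pos hp hq))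
    rw [one_mul] at this
    nlinarith [mul_pos hp hq]
  have P3 : 0 < θ*(2-s) - (θ/D)*(p+p*q) := by
    rw [show θ*(2-s) - (θ/D)*(p+p*q) = (θ*(2-s)*D - θ*(p+p*q))/D by field_simp; try ring]
    apply div_pos _ hDpos
    have key : 0 < θ * ((p*(1+q) + 2*θ*(1-p*q)) - s*D) := mul_pos hθ (by linarith)
    nlinarith [key, hD]
  have h2s : (0:ℝ) ≤ 2 - s := by linarith
  have P4 : 0 < 2-s-(θ/D)*(p+p*q) := by
    nlinarith [mul_nonneg (sub_nonneg.2 hθ') h2s, P3]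
  have P5 : 0 < θ*(1-s)+1-(θ/D)*(p+p*q) := by nlinarith [P3, hθ']
  have P6 : 0 < 1-s+(θ/D)*(1-p*q) := by
    rw [show 1-s+(θ/D)*(1-p*q) = (D - s*D + θ*(1-p*q))/D by field_simp; try ring]
    apply div_pos _ hDpos
    nlinarith [hsD, hD]
  exact ⟨hDpos, hγpos, hγ1, hs2, P2, P3, P4, P5, P6⟩



lemma lower_ge (p q θ s : ℝ) (hp : 0 < p) (hq : 0 < q) (hpq : p*q < 1)
    (hθ : 0 < θ) (hθ' : θ ≤ 1) (hs0 : 0 ≤ s)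
    (hcond : ∀ ε : ℝ, 0 < ε → ∀ δ₀ : ℝ, 0 < δ₀ → ∃ δ : ℝ, 0 < δ ∧ δ < δ₀ ∧
      ∃ 𝒰 : Set (Set E2), 𝒰.Countable ∧ attenTopSine p q ⊆ ⋃₀ 𝒰 ∧
        (∀ U ∈ 𝒰, δ ≤ diam U ∧ diam U ≤ δ ^ θ) ∧
        ∑' U : 𝒰, ENNReal.ofReal (diam (U : Set E2) ^ s) ≤ ENNReal.ofReal ε) :
    (p*(1+q) + 2*θ*(1-p*q)) / (p*(1+q) + θ*(1-p*q)) ≤ s := by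
  by_contra hcon
  push_neg at hcon
  have hpq' : 0 < 1 - p*q := by linarith
  set D : ℝ := p*(1+q) + θ*(1-p*q) with hD
  set γ : ℝ := θ / D with hγdef
  obtain ⟨hDpos, hγ, hγ1, hs2', P2, P3, P4, P5, P6⟩ :=
    lower_exponents p q θ s D γ hp hq hpq hθ hθ' hD hγdef hcon
  have hs2 : s ≤ 2 := hs2'.le
  have P7 : 0 < θ*(1-s)+γ*(1-p*q) := by
    rcases le_or_gt s 1 with h | h
    · have t1 : (0:ℝ) ≤ θ*(1-s) := mul_nonneg hθ.le (by linarith)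
      have t2 : (0:ℝ) < γ*(1-p*q) := mul_pos hγ hpq'
      linarith
    · have t1 : (0:ℝ) ≤ (1-θ)*(s-1) :=
        mul_nonneg (by linarith) (by linarith)
      linarith [t1, P6]
  have P8 : 0 < 1+γ*(1-p*q)-s := by linarith [P6]
  -- positive constants
  set c4pq : ℝ := (4:ℝ)^(-(p*q)) with hc4pq
  set c4p1 : ℝ := (4:ℝ)^(-p-1) with hc4p1
  have hc4pqpos : 0 < c4pq := Real.rpow_pos_of_pos (by norm_num) _
  have hc4p1pos : 0 < c4p1 := Real.rpow_pos_of_pos (by norm_num) _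
  set cA : ℝ := p*c4pq*c4p1/8 with hcA
  have hcApos : 0 < cA := by rw [hcA]; positivity
  set cC : ℝ := c4pq/4 with hcC
  have hcCpos : 0 < cC := by rw [hcC]; positivity
  -- eventual conditions
  have W1 : ∀ᶠ δ in nhdsWithin (0:ℝ) (Set.Ioi 0), δ < 1 := by
    have := eventually_rpow_le 1 one_pos (show (0:ℝ) < 1/2 by norm_num)
    exact this.mono (fun δ h => by rw [Real.rpow_one, one_mul] at h; linarith)
  have W2 := eventually_rpow_le 1 P2 (show (0:ℝ) < c4pq/8 by positivity)
  have W3 := eventually_rpow_le 1 P3 (show (0:ℝ) < cA/4 by positivity)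
  have W4 := eventually_rpow_le 1 P4 (show (0:ℝ) < cA/8 by positivity)
  have W5 := eventually_rpow_le 1 P5 (show (0:ℝ) < cA/8 by positivity)
  have W6 := eventually_rpow_le 1 P6 (show (0:ℝ) < cC/4 by positivity)
  have W7 := eventually_rpow_le 1 P7 (show (0:ℝ) < cC/4 by positivity)
  have W8 := eventually_rpow_le 1 P8 (show (0:ℝ) < cC/8 by positivity)
  obtain ⟨δ₀, hδ₀, hP⟩ := exists_delta0
    (W1.and (W2.and (W3.and (W4.and (W5.and (W6.and (W7.and W8)))))))
  obtain ⟨δ, hδ, hδlt, 𝒰, hcnt, hcov, hdiam, hsum⟩ := hcond 1 one_pos δ₀ hδ₀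
  obtain ⟨hδ1, h2, h3, h4, h5, h6, h7, h8⟩ := hP δ hδ hδlt
  rw [one_mul] at h2 h3 h4 h5 h6 h7 h8
  -- set up N, K, g
  have hδγ : 1 < δ^(-γ) := by
    rw [Real.rpow_neg hδ.le, lt_inv_comm₀ (by norm_num) (Real.rpow_pos_of_pos hδ _), inv_one]
    exact Real.rpow_lt_one hδ.le hδ1 hγ
  set N : ℕ := ⌈δ^(-γ)⌉₊ with hN
  have hN1 : 1 ≤ N := Nat.one_le_ceil_iff.2 (by linarith)
  have hNlb : δ^(-γ) ≤ (N:ℝ) := Nat.le_ceil _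
  have hNub : (N:ℝ) ≤ 2 * δ^(-γ) := by
    have := Nat.ceil_lt_add_one (le_of_lt (lt_trans one_pos hδγ))
    rw [← hN] at this
    linarith
  have hNpos : (0:ℝ) < N := by
    have : (1:ℝ) ≤ (N:ℝ) := by exact_mod_cast hN1
    linarith
  have h2Nub : 2*(N:ℝ) ≤ 4*δ^(-γ) := by linarith
  have h2Npos : (0:ℝ) < 2*(N:ℝ) := by linarith
  -- power bounds
  have hmul : ∀ e1 e2 : ℝ, δ^e1*δ^e2 = δ^(e1+e2) := fun e1 e2 => (Real.rpow_add hδ e1 e2).symm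
  have hpow1 : c4pq * δ^(γ*(p*q)) ≤ (2*(N:ℝ))^(-(p*q)) := by
    calc c4pq * δ^(γ*(p*q)) = (4*δ^(-γ))^(-(p*q)) := by
          rw [Real.mul_rpow (by norm_num) (Real.rpow_pos_of_pos hδ _).le, hc4pq,
            ← Real.rpow_mul hδ.le]
          congr 2
          ring
      _ ≤ (2*(N:ℝ))^(-(p*q)) :=
          Real.rpow_le_rpow_of_nonpos h2Npos h2Nub (by linarith [mul_pos hp hq])
  have hpow2 : c4p1 * δ^(γ*(p+1)) ≤ (2*(N:ℝ))^(-p-1) := by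
    calc c4p1 * δ^(γ*(p+1)) = (4*δ^(-γ))^(-p-1) := by
          rw [Real.mul_rpow (by norm_num) (Real.rpow_pos_of_pos hδ _).le, hc4p1,
            ← Real.rpow_mul hδ.le]
          congr 2
          ring
      _ ≤ (2*(N:ℝ))^(-p-1) :=
          Real.rpow_le_rpow_of_nonpos h2Npos h2Nub (by linarith)
  -- K
  set x : ℝ := (2*(N:ℝ))^(-(p*q))/(2*δ) with hx
  have hxpos : 0 < x := by
    rw [hx]
    exact div_pos (Real.rpow_pos_of_pos h2Npos _) (by linarith)
  have hy : (0:ℝ) < δ^(1-γ*(p*q)) := Real.rpow_pos_of_pos hδ _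
  have e1 : 8/c4pq ≤ δ^(γ*(p*q)-1) := by
    have hinv : δ^(γ*(p*q)-1) = 1/δ^(1-γ*(p*q)) := by
      rw [one_div, ← Real.rpow_neg hδ.le]
      congr 1
      ring
    rw [hinv, div_le_div_iff₀ hc4pqpos hy]
    linarith [h2]
  have e2 : (c4pq/2) * δ^(γ*(p*q)-1) ≤ x := by
    have heq : (c4pq/2)*δ^(γ*(p*q)-1) = (c4pq*δ^(γ*(p*q)))/(2*δ) := by
      rw [Real.rpow_sub hδ, Real.rpow_one]
      ring
    rw [heq, hx]
    have := mul_le_mul_of_nonneg_right hpow1 (by positivity : (0:ℝ) ≤ (2*δ)⁻¹)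
    simpa [div_eq_mul_inv] using this
  have hx4 : 4 ≤ x := by
    calc (4:ℝ) = (c4pq/2) * (8/c4pq) := by field_simp; ring
      _ ≤ (c4pq/2) * δ^(γ*(p*q)-1) := mul_le_mul_of_nonneg_left e1 (by positivity)
      _ ≤ x := e2
  set K : ℕ := ⌊x⌋₊ with hK
  have hK1 : 1 ≤ K := by
    have : (1:ℝ) ≤ x := by linarith
    exact Nat.le_floor (by exact_mod_cast this)
  have hKub' : (K:ℝ) ≤ x := Nat.floor_le hxpos.le
  have hKlb : x/2 ≤ (K:ℝ) := by
    have h1 : x - 1 < (K:ℝ) := Nat.sub_one_lt_floor x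
    linarith
  set g : ℝ := (p/2) * (2*(N:ℝ))^(-p-1) with hgdef
  have hgpos : 0 < g := by
    rw [hgdef]
    have := Real.rpow_pos_of_pos h2Npos (-p-1)
    positivity
  have hKub : 2*δ*K ≤ (2*(N:ℝ))^(-(p*q)) := by
    have := mul_le_mul_of_nonneg_left hKub' (by linarith : (0:ℝ) ≤ 2*δ)
    rw [hx] at this
    calc 2*δ*(K:ℝ) ≤ 2*δ*((2*(N:ℝ))^(-(p*q))/(2*δ)) := this
      _ = (2*(N:ℝ))^(-(p*q)) := by field_simp
  -- master lower bounds on N*K products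
  have hKlbpow : c4pq*δ^(γ*(p*q))/(4*δ) ≤ (K:ℝ) := by
    have heq : c4pq*δ^(γ*(p*q))/(4*δ) = ((c4pq/2)*δ^(γ*(p*q)-1))/2 := by
      rw [Real.rpow_sub hδ, Real.rpow_one]
      field_simp
      ring
    rw [heq]
    calc ((c4pq/2)*δ^(γ*(p*q)-1))/2 ≤ x/2 := by linarith [e2]
      _ ≤ (K:ℝ) := hKlb
  have hglb : (p/2)*(c4p1*δ^(γ*(p+1))) ≤ g := by
    rw [hgdef]
    exact mul_le_mul_of_nonneg_left hpow2 (by positivity)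
  have hKnn : (0:ℝ) ≤ (K:ℝ) := Nat.cast_nonneg _
  have hNnn : (0:ℝ) ≤ (N:ℝ) := Nat.cast_nonneg _
  have hNKlb : δ^(-γ) * (c4pq*δ^(γ*(p*q))/(4*δ)) ≤ (N:ℝ)*(K:ℝ) :=
    mul_le_mul hNlb hKlbpow (by positivity) hNnn
  have hSeq : δ^(-γ) * (c4pq*δ^(γ*(p*q))/(4*δ)) = cC * δ^(γ*(p*q)-γ-1) := by
    rw [hcC, show δ^(-γ) * (c4pq*δ^(γ*(p*q))/(4*δ)) = (c4pq/4)*(δ^(-γ)*δ^(γ*(p*q))/δ) by ring]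
    congr 1
    rw [hmul, show -γ+γ*(p*q) = γ*(p*q)-γ by ring]
    exact (Real.rpow_sub_one hδ.ne' _).symm
  have hNKlbS : cC * δ^(γ*(p*q)-γ-1) ≤ (N:ℝ)*(K:ℝ) := by
    rw [← hSeq]
    exact hNKlb
  have hNKg : cA * δ^(γ*(p+p*q)-1) ≤ (N:ℝ)*(K:ℝ)*g := by
    calc cA * δ^(γ*(p+p*q)-1)
        = (cC*δ^(γ*(p*q)-γ-1)) * ((p/2)*(c4p1*δ^(γ*(p+1)))) := by
          rw [show (cC*δ^(γ*(p*q)-γ-1)) * ((p/2)*(c4p1*δ^(γ*(p+1))))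
            = (cC*(p/2)*c4p1)*(δ^(γ*(p*q)-γ-1)*δ^(γ*(p+1))) by ring, hmul]
          congr 1
          · rw [hcA, hcC]; ring
          · congr 1; ring
      _ ≤ ((N:ℝ)*(K:ℝ)) * g := mul_le_mul hNKlbS hglb (by positivity)
          (by positivity)
  have hNKd : cC * δ^(γ*(p*q)-γ) ≤ (N:ℝ)*(K:ℝ)*δ := by
    calc cC * δ^(γ*(p*q)-γ) = (cC*δ^(γ*(p*q)-γ-1))*δ := by
          rw [show (cC*δ^(γ*(p*q)-γ-1))*δ = cC*(δ^(γ*(p*q)-γ-1)*δ) by ring]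
          congr 1
          rw [Real.rpow_sub_one hδ.ne']
          field_simp
      _ ≤ ((N:ℝ)*(K:ℝ))*δ := mul_le_mul_of_nonneg_right hNKlbS hδ.le
  have hNKs : cC * δ^(γ*(p*q)-γ-1+s) ≤ (N:ℝ)*(K:ℝ)*δ^s := by
    calc cC * δ^(γ*(p*q)-γ-1+s) = (cC*δ^(γ*(p*q)-γ-1))*δ^s := by
          rw [show (cC*δ^(γ*(p*q)-γ-1))*δ^s = cC*(δ^(γ*(p*q)-γ-1)*δ^s) by ring, hmul]
      _ ≤ ((N:ℝ)*(K:ℝ))*δ^s :=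
          mul_le_mul_of_nonneg_right hNKlbS (Real.rpow_nonneg hδ.le _)
  have hNKdg : cA * δ^(γ*(p+p*q)) ≤ (N:ℝ)*(K:ℝ)*δ*g := by
    calc cA * δ^(γ*(p+p*q)) = (cA*δ^(γ*(p+p*q)-1))*δ := by
          rw [show (cA*δ^(γ*(p+p*q)-1))*δ = cA*(δ^(γ*(p+p*q)-1)*δ) by ring]
          congr 1
          rw [Real.rpow_sub_one hδ.ne']
          field_simp
      _ ≤ ((N:ℝ)*(K:ℝ)*g)*δ := mul_le_mul_of_nonneg_right hNKg hδ.le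
      _ = (N:ℝ)*(K:ℝ)*δ*g := by ring
  -- the six hypotheses
  have hrnn : ∀ e : ℝ, (0:ℝ) ≤ δ^e := fun e => Real.rpow_nonneg hδ.le e
  have HA : (δ^θ)^(2-s) ≤ (N:ℝ)*(K:ℝ)*δ*g/4 := by
    have hsp : (δ^θ)^(2-s) = δ^(θ*(2-s)-γ*(p+p*q)) * δ^(γ*(p+p*q)) := by
      rw [← Real.rpow_mul hδ.le, hmul]
      congr 1
      ring
    rw [hsp]
    calc δ^(θ*(2-s)-γ*(p+p*q)) * δ^(γ*(p+p*q)) ≤ (cA/4) * δ^(γ*(p+p*q)) :=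
          mul_le_mul_of_nonneg_right h3 (hrnn _)
      _ ≤ (N:ℝ)*(K:ℝ)*δ*g/4 := by linarith [hNKdg]
  have HB1 : δ^(1-s) ≤ (N:ℝ)*(K:ℝ)*g/8 := by
    have hsp : δ^(1-s) = δ^(2-s-γ*(p+p*q)) * δ^(γ*(p+p*q)-1) := by
      rw [hmul]
      congr 1
      ring
    rw [hsp]
    calc δ^(2-s-γ*(p+p*q)) * δ^(γ*(p+p*q)-1) ≤ (cA/8) * δ^(γ*(p+p*q)-1) :=
          mul_le_mul_of_nonneg_right h4 (hrnn _)
      _ ≤ (N:ℝ)*(K:ℝ)*g/8 := by linarith [hNKg]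
  have HB2 : (δ^θ)^(1-s) ≤ (N:ℝ)*(K:ℝ)*g/8 := by
    have hsp : (δ^θ)^(1-s) = δ^(θ*(1-s)+1-γ*(p+p*q)) * δ^(γ*(p+p*q)-1) := by
      rw [← Real.rpow_mul hδ.le, hmul]
      congr 1
      ring
    rw [hsp]
    calc δ^(θ*(1-s)+1-γ*(p+p*q)) * δ^(γ*(p+p*q)-1) ≤ (cA/8) * δ^(γ*(p+p*q)-1) :=
          mul_le_mul_of_nonneg_right h5 (hrnn _)
      _ ≤ (N:ℝ)*(K:ℝ)*g/8 := by linarith [hNKg]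
  have HC1 : δ^(1-s) ≤ (N:ℝ)*(K:ℝ)*δ/4 := by
    have hsp : δ^(1-s) = δ^(1-s+γ*(1-p*q)) * δ^(γ*(p*q)-γ) := by
      rw [hmul]
      congr 1
      ring
    rw [hsp]
    calc δ^(1-s+γ*(1-p*q)) * δ^(γ*(p*q)-γ) ≤ (cC/4) * δ^(γ*(p*q)-γ) :=
          mul_le_mul_of_nonneg_right h6 (hrnn _)
      _ ≤ (N:ℝ)*(K:ℝ)*δ/4 := by linarith [hNKd]
  have HC2 : (δ^θ)^(1-s) ≤ (N:ℝ)*(K:ℝ)*δ/4 := by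
    have hsp : (δ^θ)^(1-s) = δ^(θ*(1-s)+γ*(1-p*q)) * δ^(γ*(p*q)-γ) := by
      rw [← Real.rpow_mul hδ.le, hmul]
      congr 1
      ring
    rw [hsp]
    calc δ^(θ*(1-s)+γ*(1-p*q)) * δ^(γ*(p*q)-γ) ≤ (cC/4) * δ^(γ*(p*q)-γ) :=
          mul_le_mul_of_nonneg_right h7 (hrnn _)
      _ ≤ (N:ℝ)*(K:ℝ)*δ/4 := by linarith [hNKd]
  have HD : 8 ≤ (N:ℝ)*(K:ℝ)*δ^s := by
    have hy8 : (0:ℝ) < δ^(1+γ*(1-p*q)-s) := Real.rpow_pos_of_pos hδ _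
    have einv : 8/cC ≤ δ^(γ*(p*q)-γ-1+s) := by
      have hinv : δ^(γ*(p*q)-γ-1+s) = 1/δ^(1+γ*(1-p*q)-s) := by
        rw [one_div, ← Real.rpow_neg hδ.le]
        congr 1
        ring
      rw [hinv, div_le_div_iff₀ hcCpos hy8]
      linarith [h8]
    calc (8:ℝ) = cC * (8/cC) := by field_simp
      _ ≤ cC * δ^(γ*(p*q)-γ-1+s) := mul_le_mul_of_nonneg_left einv hcCpos.le
      _ ≤ (N:ℝ)*(K:ℝ)*δ^s := hNKs
  -- contradiction via lower_count
  have hge := lower_count p q θ s δ hp hq hpq hθ hθ' hδ hδ1 hs0 hs2 N K hN1 hK1 g hgdef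
    hKub HA HB1 HB2 HC1 HC2 HD 𝒰 hcov hdiam
  have h21 := le_trans hge hsum
  have : (2:ℝ) ≤ 1 := by
    have := (ENNReal.ofReal_le_ofReal_iff (by norm_num : (0:ℝ) ≤ 1)).1 h21
    linarith
  linarith


end ATS

theorem stmt18 (p q θ : ℝ) (hp : 0 < p) (hq : 0 < q) (hpq : p * q < 1)
    (hθ : 0 < θ) (hθ' : θ ≤ 1) :
    lodim θ (attenTopSine p q) =
        (p * (1 + q) + 2 * θ * (1 - p * q)) / (p * (1 + q) + θ * (1 - p * q)) ∧
      updim θ (attenTopSine p q) =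
        (p * (1 + q) + 2 * θ * (1 - p * q)) / (p * (1 + q) + θ * (1 - p * q)) := by
  classical
  set sstar : ℝ := (p * (1 + q) + 2 * θ * (1 - p * q)) / (p * (1 + q) + θ * (1 - p * q))
    with hsstar
  set Su : Set ℝ := {s : ℝ | 0 ≤ s ∧ ∀ ε : ℝ, 0 < ε → ∃ δ₀ : ℝ, 0 < δ₀ ∧
      ∀ δ : ℝ, 0 < δ → δ < δ₀ →
    ∃ 𝒰 : Set (Set (EuclideanSpace ℝ (Fin 2))), 𝒰.Countable ∧ attenTopSine p q ⊆ ⋃₀ 𝒰 ∧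
      (∀ U ∈ 𝒰, δ ≤ diam U ∧ diam U ≤ δ ^ θ) ∧
      ∑' U : 𝒰, ENNReal.ofReal (diam (U : Set (EuclideanSpace ℝ (Fin 2))) ^ s)
        ≤ ENNReal.ofReal ε} with hSu
  set Sl : Set ℝ := {s : ℝ | 0 ≤ s ∧ ∀ ε : ℝ, 0 < ε → ∀ δ₀ : ℝ, 0 < δ₀ →
      ∃ δ : ℝ, 0 < δ ∧ δ < δ₀ ∧
    ∃ 𝒰 : Set (Set (EuclideanSpace ℝ (Fin 2))), 𝒰.Countable ∧ attenTopSine p q ⊆ ⋃₀ 𝒰 ∧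
      (∀ U ∈ 𝒰, δ ≤ diam U ∧ diam U ≤ δ ^ θ) ∧
      ∑' U : 𝒰, ENNReal.ofReal (diam (U : Set (EuclideanSpace ℝ (Fin 2))) ^ s)
        ≤ ENNReal.ofReal ε} with hSl
  have hlodim : lodim θ (attenTopSine p q) = sInf Sl := rfl
  have hupdim : updim θ (attenTopSine p q) = sInf Su := rfl
  have hmemSu : ∀ s : ℝ, sstar < s → s ∈ Su := by
    intro s hs
    exact ATS.upper_mem p q θ s hp hq hpq hθ hθ' hs
  have hsub : Su ⊆ Sl := by
    rintro s ⟨hs0, hs⟩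
    refine ⟨hs0, ?_⟩
    intro ε hε δ₀' hδ₀'
    obtain ⟨δ₀, hδ₀, h⟩ := hs ε hε
    have hmin : 0 < min δ₀ δ₀' := lt_min hδ₀ hδ₀'
    have hm1 : min δ₀ δ₀' ≤ δ₀ := min_le_left _ _
    have hm2 : min δ₀ δ₀' ≤ δ₀' := min_le_right _ _
    refine ⟨min δ₀ δ₀' / 2, by positivity, by linarith, ?_⟩
    exact h _ (by positivity) (by linarith)
  have hsstarpos : 0 < sstar := by
    rw [hsstar]
    have h1 : 0 < 1 - p*q := by linarith
    positivity
  have hSune : Su.Nonempty := ⟨sstar + 1, hmemSu _ (by linarith)⟩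
  have hbddSu : BddBelow Su := ⟨0, fun x hx => hx.1⟩
  have hbddSl : BddBelow Sl := ⟨0, fun x hx => hx.1⟩
  have hup_le : sInf Su ≤ sstar := by
    apply le_of_forall_pos_le_add
    intro ε hε
    exact csInf_le hbddSu (hmemSu (sstar + ε) (by linarith))
  have hlo_ge : sstar ≤ sInf Sl := by
    apply le_csInf (hSune.mono hsub)
    intro b hb
    exact ATS.lower_ge p q θ b hp hq hpq hθ hθ' hb.1 hb.2
  have hlo_le_up : sInf Sl ≤ sInf Su := csInf_le_csInf hbddSl hSune hsub
  constructor
  · rw [hlodim]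
    exact le_antisymm (le_trans hlo_le_up hup_le) hlo_ge
  · rw [hupdim]
    exact le_antisymm hup_le (le_trans hlo_ge hlo_le_up)
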